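/- arXiv:0706.3441 — 2 statements merged into one kernel-verified Lean document; each statement's English description precedes it below -/
import Mathlib

section
/- Let K/L be a finite extension of H-graded fields and R a graded valuation ring of L. The map A ↦ A₁ = A ∩ K₁ is a bijection between the set of graded valuation rings of K extending R and the set of valuation rings of the field K₁ extending the valuation ring R₁ = R ∩ L₁ of L₁. Moreover, for graded valuation rings R ⊆ R' of L with respective extensions A, A' to K, one has A ⊆ A' if and only if A₁ ⊆ A'₁. -/
open scoped DirectSum

/-- An `H`-graded field: a nonzero commutative ring with an internal grading by the
commutative group `H` in which every nonzero homogeneous element is invertible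
(with homogeneous inverse). -/
structure GradedField (H : Type*) [CommGroup H] [DecidableEq H] (K : Type*) [CommRing K] where
  comp : H → AddSubgroup K
  one_mem : (1 : K) ∈ comp 1
  mul_mem : ∀ {g h : H} {x y : K}, x ∈ comp g → y ∈ comp h → x * y ∈ comp (g * h)
  isInternal : DirectSum.IsInternal fun h : H => comp h
  zero_ne_one : (0 : K) ≠ 1
  inv_mem : ∀ {h : H} {x : K}, x ∈ comp h → x ≠ 0 → ∃ y ∈ comp h⁻¹, x * y = 1

namespace GradedField

variable {H : Type*} [CommGroup H] [DecidableEq H] {K : Type*} [CommRing K] (F : GradedField H K)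

/-- A homogeneous element. -/
def Homogeneous (x : K) : Prop := ∃ h, x ∈ F.comp h

/-- A subring is graded if each of its elements is a sum of homogeneous elements of the
subring. -/
def IsGradedSubring (R : Subring K) : Prop :=
  ∀ x ∈ R, x ∈ AddSubgroup.closure {y : K | y ∈ R ∧ F.Homogeneous y}

/-- A graded subfield: a graded subring closed under inverses of nonzero homogeneous
elements. -/
structure IsGradedSubfield (L : Subring K) : Prop where
  graded : F.IsGradedSubring L
  inv_mem : ∀ x ∈ L, F.Homogeneous x → x ≠ 0 → Ring.inverse x ∈ L

/-- A graded valuation ring of the graded subfield `L`: a graded subring `R ⊆ L` such that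
every nonzero homogeneous element of `L` lies in `R` or has its inverse in `R`. -/
def IsGradedValRing (L R : Subring K) : Prop :=
  R ≤ L ∧ F.IsGradedSubring R ∧
    ∀ x ∈ L, F.Homogeneous x → x ≠ 0 → (x ∈ R ∨ Ring.inverse x ∈ R)

/-- The identity component `K₁`, as a subring. -/
def oneComponent : Subring K where
  carrier := F.comp 1
  one_mem' := F.one_mem
  mul_mem' := fun ha hb => by simpa using F.mul_mem ha hb
  add_mem' := fun ha hb => (F.comp 1).add_mem ha hb
  zero_mem' := (F.comp 1).zero_mem
  neg_mem' := fun ha => (F.comp 1).neg_mem ha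

theorem mem_oneComponent {x : K} : x ∈ F.oneComponent ↔ x ∈ F.comp 1 := Iff.rfl

/-- The value group `ρ(L^×) ⊆ H` of a graded subfield `L`. -/
def valueGroup (L : Subring K)
    (hL : ∀ x ∈ L, F.Homogeneous x → x ≠ 0 → Ring.inverse x ∈ L) : Subgroup H where
  carrier := {h | ∃ x ∈ F.comp h, x ≠ 0 ∧ x ∈ L}
  one_mem' := ⟨1, F.one_mem, Ne.symm F.zero_ne_one, L.one_mem⟩
  mul_mem' := by
    rintro g h ⟨x, hx, hx0, hxL⟩ ⟨y, hy, hy0, hyL⟩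
    obtain ⟨x', hx', hxx'⟩ := F.inv_mem hx hx0
    obtain ⟨y', hy', hyy'⟩ := F.inv_mem hy hy0
    refine ⟨x * y, F.mul_mem hx hy, ?_, L.mul_mem hxL hyL⟩
    intro h0
    have h1 : x * y * (x' * y') = 1 := by rw [mul_mul_mul_comm, hxx', hyy', one_mul]
    rw [h0, zero_mul] at h1
    exact F.zero_ne_one h1
  inv_mem' := by
    rintro g ⟨x, hx, hx0, hxL⟩
    obtain ⟨y, hy, hxy⟩ := F.inv_mem hx hx0
    have hu : IsUnit x := IsUnit.of_mul_eq_one y hxy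
    have hyx : Ring.inverse x = y := by
      calc Ring.inverse x = Ring.inverse x * (x * y) := by rw [hxy, mul_one]
        _ = Ring.inverse x * x * y := by ring
        _ = y := by rw [Ring.inverse_mul_cancel x hu, one_mul]
    refine ⟨y, hy, ?_, ?_⟩
    · intro h0; rw [h0, mul_zero] at hxy; exact F.zero_ne_one hxy
    · rw [← hyx]; exact hL x hxL ⟨g, hx⟩ hx0

/-- The value group `ρ(K^×)` of the whole graded field. -/
def fullValueGroup : Subgroup H :=
  F.valueGroup ⊤ (fun _ _ _ _ => Subring.mem_top _)

/-- `K₁` as a module over `L₁ = K₁ ∩ L`. -/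
def oneSubmodule (L : Subring K) : Submodule ↥(F.oneComponent ⊓ L) K where
  carrier := F.comp 1
  add_mem' := fun ha hb => (F.comp 1).add_mem ha hb
  zero_mem' := (F.comp 1).zero_mem
  smul_mem' := fun c x hx => by
    have hc : (c : K) ∈ F.comp 1 := ((Subring.mem_inf).mp c.2).1
    have := F.mul_mem hc hx
    simpa [Subring.smul_def] using this

/-- A graded automorphism: a ring automorphism preserving each graded component. -/
def IsGradedAut (σ : RingAut K) : Prop := ∀ (h : H) (x : K), x ∈ F.comp h → σ x ∈ F.comp h

end GradedField

/-- The fixed subring `K^G` of a group of ring automorphisms. -/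
def fixedSubring {K : Type*} [CommRing K] (G : Subgroup (RingAut K)) : Subring K where
  carrier := {x | ∀ σ ∈ G, σ x = x}
  one_mem' := fun σ _ => map_one σ
  mul_mem' := fun ha hb σ hσ => by rw [map_mul, ha σ hσ, hb σ hσ]
  add_mem' := fun ha hb σ hσ => by rw [map_add, ha σ hσ, hb σ hσ]
  zero_mem' := fun σ _ => map_zero σ
  neg_mem' := fun ha σ hσ => by rw [map_neg, ha σ hσ]

theorem mem_fixedSubring {K : Type*} [CommRing K] {G : Subgroup (RingAut K)} {x : K} :
    x ∈ fixedSubring G ↔ ∀ σ ∈ G, σ x = x := Iff.rfl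


namespace GradedField

variable {H : Type*} [CommGroup H] [DecidableEq H] {K : Type*} [CommRing K]
variable (F : GradedField H K)

/-- Decomposition of an element into its homogeneous components. -/
noncomputable def decompose (x : K) : ⨁ h : H, ↥(F.comp h) :=
  (Equiv.ofBijective _ F.isInternal).symm x

/-- The degree-`h` homogeneous component of `x`. -/
noncomputable def component (h : H) (x : K) : K := (F.decompose x h : K)

/-- The inertia subgroup of `G`: graded automorphisms in `G` acting trivially on `K₁`. -/
def inertia (G : Subgroup (RingAut K)) : Subgroup (RingAut K) where
  carrier := {σ | σ ∈ G ∧ ∀ x ∈ F.comp 1, σ x = x}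
  one_mem' := ⟨G.one_mem, fun _ _ => rfl⟩
  mul_mem' := fun {a b} ha hb => ⟨G.mul_mem ha.1 hb.1, fun x hx => by
    show a (b x) = x
    rw [hb.2 x hx, ha.2 x hx]⟩
  inv_mem' := fun {a} ha => ⟨G.inv_mem ha.1, fun x hx => by
    conv_lhs => rw [← ha.2 x hx]
    exact a.symm_apply_apply x⟩

theorem mem_inertia {G : Subgroup (RingAut K)} {σ : RingAut K} :
    σ ∈ F.inertia G ↔ σ ∈ G ∧ ∀ x ∈ F.comp 1, σ x = x := Iff.rfl

end GradedField

/-- A subring `S` containing a subring `L`, viewed as an `L`-submodule of the ambient ring. -/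
def Subring.toSubmoduleOver {K : Type*} [CommRing K] (L S : Subring K) (hLS : L ≤ S) :
    Submodule ↥L K where
  carrier := S
  add_mem' := fun ha hb => S.add_mem ha hb
  zero_mem' := S.zero_mem
  smul_mem' := fun c x hx => S.mul_mem (hLS c.2) hx

section ZR

variable {H : Type*} [CommGroup H] [DecidableEq H] {K : Type*} [CommRing K]

/-- The Zariski–Riemann space of graded valuation rings of `K` containing `k₀`. -/
def GradedField.ZR (F : GradedField H K) (k₀ : Subring K) : Type _ :=
  {O : Subring K // F.IsGradedValRing ⊤ O ∧ k₀ ≤ O}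

/-- The set of homogeneous units (nonzero homogeneous elements) of `K`. -/
def GradedField.HomogUnits (F : GradedField H K) : Type _ :=
  {x : K // x ≠ 0 ∧ F.Homogeneous x}

open Classical in
/-- The embedding of the Zariski–Riemann space into `{0,1}^{K^×}` via characteristic
functions. -/
noncomputable def GradedField.chi (F : GradedField H K) (k₀ : Subring K) (O : F.ZR k₀) :
    F.HomogUnits → Bool :=
  fun x => decide (x.1 ∈ O.1)

/-- Basic open sets `P{F}∖{G}` of the constructible topology, for finite sets `F`, `G` of
homogeneous units. -/
def GradedField.constructibleBasis (F : GradedField H K) (k₀ : Subring K) :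
    Set (Set (F.ZR k₀)) :=
  {s | ∃ Fs Gs : Finset K, (∀ a ∈ Fs, a ≠ 0 ∧ F.Homogeneous a) ∧
    (∀ b ∈ Gs, b ≠ 0 ∧ F.Homogeneous b) ∧
    s = {O : F.ZR k₀ | (∀ a ∈ Fs, a ∈ O.1) ∧ ∀ b ∈ Gs, b ∉ O.1}}

/-- The constructible topology on the Zariski–Riemann space. -/
def GradedField.constructibleTop (F : GradedField H K) (k₀ : Subring K) :
    TopologicalSpace (F.ZR k₀) :=
  TopologicalSpace.generateFrom (F.constructibleBasis k₀)


namespace GradedField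

variable {H : Type*} [CommGroup H] [DecidableEq H] {K : Type*} [CommRing K] (F : GradedField H K)

noncomputable def dec : DirectSum.Decomposition F.comp :=
  F.isInternal.chooseDecomposition

noncomputable def cmp (g : H) (x : K) : K :=
  letI := F.dec
  (DirectSum.decompose F.comp x g : K)

theorem cmp_mem (g : H) (x : K) : F.cmp g x ∈ F.comp g := by
  letI := F.dec
  exact (DirectSum.decompose F.comp x g).2

theorem cmp_add (g : H) (x y : K) : F.cmp g (x + y) = F.cmp g x + F.cmp g y := by
  letI := F.dec
  show ((DirectSum.decompose F.comp (x + y)) g : K) = _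
  rw [DirectSum.decompose_add]
  rfl

theorem cmp_zero (g : H) : F.cmp g 0 = 0 := by
  letI := F.dec
  show ((DirectSum.decompose F.comp 0) g : K) = 0
  rw [DirectSum.decompose_zero]
  rfl

/-- `cmp g` as an `AddMonoidHom`. -/
noncomputable def cmpHom (g : H) : K →+ K where
  toFun := F.cmp g
  map_zero' := F.cmp_zero g
  map_add' := F.cmp_add g

theorem cmp_neg (g : H) (x : K) : F.cmp g (-x) = -F.cmp g x :=
  map_neg (F.cmpHom g) x

theorem cmp_of_mem_same {g : H} {x : K} (hx : x ∈ F.comp g) : F.cmp g x = x := by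
  letI := F.dec
  exact DirectSum.decompose_of_mem_same F.comp hx

theorem cmp_of_mem_ne {g g' : H} {x : K} (hx : x ∈ F.comp g) (h : g ≠ g') : F.cmp g' x = 0 := by
  letI := F.dec
  exact DirectSum.decompose_of_mem_ne F.comp hx h

theorem exists_sum_cmp (x : K) : ∃ s : Finset H, x = ∑ g ∈ s, F.cmp g x := by
  letI := F.dec
  classical
  refine ⟨(DirectSum.decompose F.comp x).support, ?_⟩
  conv_lhs => rw [← DirectSum.sum_support_decompose F.comp x]
  rfl

theorem cmp_exists_ne_zero {x : K} (hx : x ≠ 0) : ∃ g, F.cmp g x ≠ 0 := by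
  by_contra hall
  push_neg at hall
  obtain ⟨s, hs⟩ := F.exists_sum_cmp x
  exact hx (by rw [hs]; exact Finset.sum_eq_zero fun g _ => hall g)

theorem degree_eq {g h : H} {x : K} (hg : x ∈ F.comp g) (hh : x ∈ F.comp h) (hx : x ≠ 0) :
    g = h := by
  letI := F.dec
  exact DirectSum.degree_eq_of_mem_mem F.comp hg hh hx

theorem cmp_induction {p : K → Prop} (h_zero : p 0)
    (h_homog : ∀ (i : H), ∀ x ∈ F.comp i, p x)
    (h_add : ∀ x y, p x → p y → p (x + y)) : ∀ x, p x := by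
  letI := F.dec
  exact DirectSum.Decomposition.inductionOn F.comp h_zero (fun {i} m => h_homog i m m.2) h_add

theorem cmp_mul_homog {d : H} {c : K} (hc : c ∈ F.comp d) (g : H) (x : K) :
    F.cmp (g * d) (x * c) = F.cmp g x * c := by
  induction x using F.cmp_induction with
  | h_zero => simp [F.cmp_zero]
  | h_homog i z hz =>
    by_cases hig : i = g
    · subst hig
      rw [F.cmp_of_mem_same hz, F.cmp_of_mem_same (F.mul_mem hz hc)]
    · rw [F.cmp_of_mem_ne hz hig, F.cmp_of_mem_ne (F.mul_mem hz hc)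
        (fun hh => hig (mul_right_cancel hh)), zero_mul]
  | h_add x y hx hy =>
    rw [add_mul, F.cmp_add, F.cmp_add, hx, hy, add_mul]

theorem inverse_eq' {x y : K} (h : x * y = 1) : Ring.inverse x = y := by
  have hu : IsUnit x := IsUnit.of_mul_eq_one y h
  calc Ring.inverse x = Ring.inverse x * (x * y) := by rw [h, mul_one]
    _ = Ring.inverse x * x * y := by ring
    _ = y := by rw [Ring.inverse_mul_cancel x hu, one_mul]

theorem ne_zero_of_mul_eq_one (F : GradedField H K) {x y : K} (h : x * y = 1) : x ≠ 0 := by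
  intro h0
  rw [h0, zero_mul] at h
  exact F.zero_ne_one h

theorem mul_inverse_cancel {h : H} {x : K} (hx : x ∈ F.comp h) (hx0 : x ≠ 0) :
    x * Ring.inverse x = 1 := by
  obtain ⟨y, _, hxy⟩ := F.inv_mem hx hx0
  rw [inverse_eq' hxy]; exact hxy

theorem inverse_mem' {h : H} {x : K} (hx : x ∈ F.comp h) (hx0 : x ≠ 0) :
    Ring.inverse x ∈ F.comp h⁻¹ := by
  obtain ⟨y, hy, hxy⟩ := F.inv_mem hx hx0
  rw [inverse_eq' hxy]; exact hy

theorem inverse_ne_zero' {h : H} {x : K} (hx : x ∈ F.comp h) (hx0 : x ≠ 0) :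
    Ring.inverse x ≠ 0 :=
  F.ne_zero_of_mul_eq_one (by rw [mul_comm]; exact F.mul_inverse_cancel hx hx0)

theorem inverse_inverse' {h : H} {x : K} (hx : x ∈ F.comp h) (hx0 : x ≠ 0) :
    Ring.inverse (Ring.inverse x) = x :=
  inverse_eq' (by rw [mul_comm]; exact F.mul_inverse_cancel hx hx0)

theorem hmul_ne_zero {g h : H} {x y : K} (hx : x ∈ F.comp g) (hy : y ∈ F.comp h)
    (hx0 : x ≠ 0) (hy0 : y ≠ 0) : x * y ≠ 0 := by
  apply F.ne_zero_of_mul_eq_one (y := Ring.inverse x * Ring.inverse y)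
  calc x * y * (Ring.inverse x * Ring.inverse y)
      = (x * Ring.inverse x) * (y * Ring.inverse y) := by ring
    _ = 1 := by rw [F.mul_inverse_cancel hx hx0, F.mul_inverse_cancel hy hy0, one_mul]

theorem inverse_mul' {g h : H} {x y : K} (hx : x ∈ F.comp g) (hy : y ∈ F.comp h)
    (hx0 : x ≠ 0) (hy0 : y ≠ 0) :
    Ring.inverse (x * y) = Ring.inverse x * Ring.inverse y :=
  inverse_eq' (by
    calc x * y * (Ring.inverse x * Ring.inverse y)
        = (x * Ring.inverse x) * (y * Ring.inverse y) := by ring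
      _ = 1 := by rw [F.mul_inverse_cancel hx hx0, F.mul_inverse_cancel hy hy0, one_mul])

theorem pow_mem' {h : H} {x : K} (hx : x ∈ F.comp h) (n : ℕ) : x ^ n ∈ F.comp (h ^ n) := by
  induction n with
  | zero => rw [pow_zero, pow_zero]; exact F.one_mem
  | succ n ih => rw [pow_succ, pow_succ]; exact F.mul_mem ih hx

theorem pow_ne_zero'' {h : H} {x : K} (hx : x ∈ F.comp h) (hx0 : x ≠ 0) (n : ℕ) :
    x ^ n ≠ 0 := by
  induction n with
  | zero => rw [pow_zero]; exact fun h0 => F.zero_ne_one h0.symm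
  | succ n ih => rw [pow_succ]; exact F.hmul_ne_zero (F.pow_mem' hx n) hx ih hx0

theorem inverse_pow' {h : H} {x : K} (hx : x ∈ F.comp h) (hx0 : x ≠ 0) (n : ℕ) :
    Ring.inverse (x ^ n) = (Ring.inverse x) ^ n :=
  inverse_eq' (by rw [← mul_pow, F.mul_inverse_cancel hx hx0, one_pow])

theorem pow_mul_inverse_pow_pred {h : H} {u : K} (hu : u ∈ F.comp h) (hu0 : u ≠ 0)
    {n : ℕ} (hn : 0 < n) : u ^ n * (Ring.inverse u) ^ (n - 1) = u := by
  obtain ⟨m, rfl⟩ : ∃ m, n = m + 1 := ⟨n - 1, by omega⟩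
  have : m + 1 - 1 = m := by omega
  rw [this, pow_succ, mul_comm (u ^ m) u, mul_assoc, ← mul_pow,
    F.mul_inverse_cancel hu hu0, one_pow, mul_one]

theorem mem_of_pow_mem (S : Subring K) {h : H} {u : K} (hu : u ∈ F.comp h) (hu0 : u ≠ 0)
    {n : ℕ} (hn : 0 < n) (hpow : u ^ n ∈ S) (hdi : u ∈ S ∨ Ring.inverse u ∈ S) : u ∈ S := by
  rcases hdi with h1 | h1
  · exact h1
  · have := S.mul_mem hpow (S.pow_mem h1 (n - 1))
    rwa [F.pow_mul_inverse_pow_pred hu hu0 hn] at this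

/-- recover a factor from a product with a homogeneous unit -/
theorem factor_eq {g : H} {z w x : K} (hw : w ∈ F.comp g) (hw0 : w ≠ 0)
    (hx : x = z * w) : z = x * Ring.inverse w := by
  rw [hx, mul_assoc, F.mul_inverse_cancel hw hw0, mul_one]

theorem components_mem {S : Subring K} (hS : F.IsGradedSubring S) {x : K} (hx : x ∈ S)
    (g : H) : F.cmp g x ∈ S := by
  have key : x ∈ AddSubgroup.closure {y : K | y ∈ S ∧ F.Homogeneous y} := hS x hx
  have : AddSubgroup.closure {y : K | y ∈ S ∧ F.Homogeneous y} ≤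
      { carrier := {x | ∀ g, F.cmp g x ∈ S}
        zero_mem' := fun g => by rw [F.cmp_zero]; exact S.zero_mem
        add_mem' := fun ha hb g => by rw [F.cmp_add]; exact S.add_mem (ha g) (hb g)
        neg_mem' := fun ha g => by rw [F.cmp_neg]; exact S.neg_mem (ha g) } := by
    apply AddSubgroup.closure_le _ |>.2
    rintro y ⟨hyS, h₀, hy⟩
    intro g'
    by_cases hg : h₀ = g'
    · subst hg; rw [F.cmp_of_mem_same hy]; exact hyS
    · rw [F.cmp_of_mem_ne hy hg]; exact S.zero_mem
  exact this key g

theorem le_of_homog_le {S T : Subring K} (hS : F.IsGradedSubring S)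
    (h : ∀ y ∈ S, F.Homogeneous y → y ∈ T) : S ≤ T := by
  intro x hx
  have key := hS x hx
  have : AddSubgroup.closure {y : K | y ∈ S ∧ F.Homogeneous y} ≤ T.toAddSubgroup :=
    (AddSubgroup.closure_le _).2 (fun y hy => h y hy.1 hy.2)
  exact this key

end GradedField
namespace GradedField

variable {H : Type*} [CommGroup H] [DecidableEq H] {K : Type*} [CommRing K] (F : GradedField H K)

theorem exists_dep (h01 : (0 : K) ≠ 1) (L : Subring K)
    (hfin : Module.rank ↥L K < Cardinal.aleph0) (x : K) :
    ∃ (N : ℕ) (a : Fin (N + 1) → K), (∀ i, a i ∈ L) ∧ (∑ i, a i * x ^ (i : ℕ)) = 0 ∧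
      ∃ j, a j ≠ 0 := by
  haveI : Nontrivial K := ⟨0, 1, h01⟩
  obtain ⟨N, hN⟩ := Cardinal.lt_aleph0.1 hfin
  have hnotli : ¬ LinearIndependent ↥L (fun i : Fin (N + 1) => x ^ (i : ℕ)) := by
    intro hli
    have h2 := hli.cardinal_lift_le_rank
    rw [hN, Cardinal.mk_fin, Cardinal.lift_natCast, Cardinal.lift_natCast,
      Nat.cast_le] at h2
    omega
  rw [not_linearIndependent_iff] at hnotli
  obtain ⟨s, g, hsum, j, hjs, hj⟩ := hnotli
  classical
  have hsum' : ∑ i ∈ s, (g i : K) * x ^ (i : ℕ) = 0 := by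
    rw [← hsum]
    exact Finset.sum_congr rfl fun i _ => by rw [Subring.smul_def, smul_eq_mul]
  refine ⟨N, fun i => if i ∈ s then (g i : K) else 0, fun i => ?_, ?_, ⟨j, ?_⟩⟩
  · show (if i ∈ s then (g i : K) else 0) ∈ L
    split
    · exact (g i).2
    · exact L.zero_mem
  · have hc : ∀ i ∈ Finset.univ, (if i ∈ s then (g i : K) else 0) * x ^ (i : ℕ) =
        if i ∈ s then (g i : K) * x ^ (i : ℕ) else 0 := by
      intro i _; split <;> simp
    have h4 : ∑ i : Fin (N + 1), (if i ∈ s then (g i : K) else 0) * x ^ (i : ℕ) = 0 := by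
      rw [Finset.sum_congr rfl hc, Finset.sum_ite_mem, Finset.univ_inter, hsum']
    exact h4
  · show (if j ∈ s then (g j : K) else 0) ≠ 0
    rw [if_pos hjs]
    simpa using hj

theorem exists_pow_deg_L (L : Subring K) (hL : F.IsGradedSubfield L)
    (hfin : Module.rank ↥L K < Cardinal.aleph0) {h : H} {x : K}
    (hx : x ∈ F.comp h) (hx0 : x ≠ 0) :
    ∃ n : ℕ, 0 < n ∧ ∃ y, y ∈ L ∧ y ∈ F.comp (h ^ n) ∧ y ≠ 0 := by
  obtain ⟨N, a, haL, hsum, j, hj⟩ := exists_dep F.zero_ne_one L hfin x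
  obtain ⟨g₀, hg₀⟩ := F.cmp_exists_ne_zero hj
  set e : H := g₀ * h ^ (j : ℕ) with he
  set b : Fin (N + 1) → K := fun i => F.cmp (e * (h ^ (i : ℕ))⁻¹) (a i) with hb
  have hbL : ∀ i, b i ∈ L := fun i => F.components_mem hL.graded (haL i) _
  have hbc : ∀ i : Fin (N + 1), b i ∈ F.comp (e * (h ^ (i : ℕ))⁻¹) := fun i => F.cmp_mem _ _
  have hkey : ∀ i : Fin (N + 1), b i * x ^ (i : ℕ) = F.cmp e (a i * x ^ (i : ℕ)) := by
    intro i
    have := F.cmp_mul_homog (F.pow_mem' hx (i : ℕ)) (e * (h ^ (i : ℕ))⁻¹) (a i)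
    rw [inv_mul_cancel_right] at this
    exact this.symm
  have hs0 : ∑ i, b i * x ^ (i : ℕ) = 0 := by
    rw [Finset.sum_congr rfl fun i _ => hkey i]
    calc ∑ i, F.cmp e (a i * x ^ (i : ℕ))
        = F.cmp e (∑ i, a i * x ^ (i : ℕ)) := (map_sum (F.cmpHom e) _ _).symm
      _ = 0 := by rw [hsum, F.cmp_zero]
  have hbj : b j ≠ 0 := by
    have hee : e * (h ^ (j : ℕ))⁻¹ = g₀ := by rw [he, mul_inv_cancel_right]
    show F.cmp (e * (h ^ (j : ℕ))⁻¹) (a j) ≠ 0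
    rw [hee]; exact hg₀
  have hex : ∃ i, i ≠ j ∧ b i ≠ 0 := by
    by_contra hcon
    push_neg at hcon
    have hsingle : ∑ i, b i * x ^ (i : ℕ) = b j * x ^ (j : ℕ) :=
      Finset.sum_eq_single j (fun i _ hij => by rw [hcon i hij, zero_mul])
        (fun hj' => absurd (Finset.mem_univ j) hj')
    rw [hs0] at hsingle
    exact F.hmul_ne_zero (hbc j) (F.pow_mem' hx (j : ℕ)) hbj
      (F.pow_ne_zero'' hx hx0 (j : ℕ)) hsingle.symm
  obtain ⟨i, hij, hbi⟩ := hex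
  have key : ∀ (p q : Fin (N + 1)), (p : ℕ) < (q : ℕ) → b p ≠ 0 → b q ≠ 0 →
      ∃ n : ℕ, 0 < n ∧ ∃ y, y ∈ L ∧ y ∈ F.comp (h ^ n) ∧ y ≠ 0 := by
    intro p q hpq hbp hbq
    refine ⟨(q : ℕ) - (p : ℕ), by omega, b p * Ring.inverse (b q), ?_, ?_, ?_⟩
    · exact L.mul_mem (hbL p) (hL.inv_mem _ (hbL q) ⟨_, hbc q⟩ hbq)
    · have hmem := F.mul_mem (hbc p) (F.inverse_mem' (hbc q) hbq)
      have hdeg : (e * (h ^ (p : ℕ))⁻¹) * (e * (h ^ (q : ℕ))⁻¹)⁻¹ =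
          h ^ ((q : ℕ) - (p : ℕ)) := by
        have hq : h ^ ((q : ℕ) - (p : ℕ)) * h ^ (p : ℕ) = h ^ (q : ℕ) := by
          rw [← pow_add]; congr 1; omega
        calc (e * (h ^ (p : ℕ))⁻¹) * (e * (h ^ (q : ℕ))⁻¹)⁻¹
            = (e * (h ^ (p : ℕ))⁻¹) * (e⁻¹ * h ^ (q : ℕ)) := by rw [mul_inv, inv_inv]
          _ = (e * e⁻¹) * ((h ^ (p : ℕ))⁻¹ * h ^ (q : ℕ)) := mul_mul_mul_comm _ _ _ _
          _ = h ^ (q : ℕ) * (h ^ (p : ℕ))⁻¹ := by rw [mul_inv_cancel, one_mul, mul_comm]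
          _ = h ^ ((q : ℕ) - (p : ℕ)) := by rw [← hq, mul_inv_cancel_right]
      rwa [hdeg] at hmem
    · exact F.hmul_ne_zero (hbc p) (F.inverse_mem' (hbc q) hbq) hbp
        (F.inverse_ne_zero' (hbc q) hbq)
  have hij' : (i : ℕ) ≠ (j : ℕ) := fun hc => hij (Fin.ext hc)
  rcases lt_or_gt_of_ne hij' with hlt | hlt
  · exact key i j hlt hbi hbj
  · exact key j i hlt hbj hbi

end GradedField
namespace GradedField

variable {H : Type*} [CommGroup H] [DecidableEq H] {K : Type*} [CommRing K] (F : GradedField H K)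

theorem exists_min (A : Subring K)
    (dich : ∀ x ∈ F.comp 1, x ≠ 0 → x ∈ A ∨ Ring.inverse x ∈ A)
    {ι : Type*} {g : H} (s : Finset ι) (f : ι → K) (hne : s.Nonempty)
    (hmem : ∀ i ∈ s, f i ∈ F.comp g ∧ f i ≠ 0) :
    ∃ i₀ ∈ s, ∀ k ∈ s, f k * Ring.inverse (f i₀) ∈ A := by
  classical
  revert hne hmem
  induction s using Finset.induction_on with
  | empty => rintro ⟨k, hk⟩ -; simp at hk
  | @insert a s' hnotin ih =>
    intro hne hmem
    have hfa := hmem a (Finset.mem_insert_self a s')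
    rcases Finset.eq_empty_or_nonempty s' with rfl | hs'ne
    · refine ⟨a, Finset.mem_insert_self a _, ?_⟩
      intro k hk
      rcases Finset.mem_insert.1 hk with rfl | hk'
      · rw [F.mul_inverse_cancel hfa.1 hfa.2]; exact A.one_mem
      · simp at hk'
    · obtain ⟨i₀, hi₀, hmin⟩ := ih hs'ne (fun i hi => hmem i (Finset.mem_insert_of_mem hi))
      have hfi₀ := hmem i₀ (Finset.mem_insert_of_mem hi₀)
      have hri : Ring.inverse (f i₀) ∈ F.comp g⁻¹ := F.inverse_mem' hfi₀.1 hfi₀.2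
      have hr : f a * Ring.inverse (f i₀) ∈ F.comp 1 := by
        have := F.mul_mem hfa.1 hri
        rwa [mul_inv_cancel] at this
      have hr0 : f a * Ring.inverse (f i₀) ≠ 0 :=
        F.hmul_ne_zero hfa.1 hri hfa.2 (F.inverse_ne_zero' hfi₀.1 hfi₀.2)
      rcases dich _ hr hr0 with hA | hA
      · refine ⟨i₀, Finset.mem_insert_of_mem hi₀, ?_⟩
        intro k hk
        rcases Finset.mem_insert.1 hk with rfl | hk'
        · exact hA
        · exact hmin k hk'
      · have hinv : Ring.inverse (f a * Ring.inverse (f i₀)) = f i₀ * Ring.inverse (f a) := by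
          apply inverse_eq'
          calc (f a * Ring.inverse (f i₀)) * (f i₀ * Ring.inverse (f a))
              = (f a * Ring.inverse (f a)) * (f i₀ * Ring.inverse (f i₀)) := by ring
            _ = 1 := by
                rw [F.mul_inverse_cancel hfa.1 hfa.2, F.mul_inverse_cancel hfi₀.1 hfi₀.2,
                  one_mul]
        rw [hinv] at hA
        refine ⟨a, Finset.mem_insert_self a _, ?_⟩
        intro k hk
        rcases Finset.mem_insert.1 hk with rfl | hk'
        · rw [F.mul_inverse_cancel hfa.1 hfa.2]; exact A.one_mem
        · have h1 := hmin k hk'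
          have heq : f k * Ring.inverse (f a) =
              (f k * Ring.inverse (f i₀)) * (f i₀ * Ring.inverse (f a)) := by
            calc f k * Ring.inverse (f a) = f k * 1 * Ring.inverse (f a) := by rw [mul_one]
              _ = f k * (Ring.inverse (f i₀) * f i₀) * Ring.inverse (f a) := by
                  rw [mul_comm (Ring.inverse (f i₀)) (f i₀),
                    F.mul_inverse_cancel hfi₀.1 hfi₀.2]
              _ = _ := by ring
          rw [heq]; exact A.mul_mem h1 hA

theorem add_nonU (A : Subring K)
    (dich : ∀ x ∈ F.comp 1, x ≠ 0 → x ∈ A ∨ Ring.inverse x ∈ A)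
    {a b : K} (ha1 : a ∈ F.comp 1) (hb1 : b ∈ F.comp 1)
    (ha : a = 0 ∨ Ring.inverse a ∉ A) (hb : b = 0 ∨ Ring.inverse b ∉ A) :
    a + b = 0 ∨ Ring.inverse (a + b) ∉ A := by
  have key : ∀ a b : K, a ∈ F.comp 1 → b ∈ F.comp 1 → a ≠ 0 → b ≠ 0 → a + b ≠ 0 →
      a * Ring.inverse b ∈ A → Ring.inverse (a + b) ∈ A → Ring.inverse b ∈ A := by
    intro a b ha1 hb1 ha0 hb0 hab0 hr hinv
    have hab1 : a + b ∈ F.comp 1 := (F.comp 1).add_mem ha1 hb1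
    have hsum : b * (a * Ring.inverse b + 1) = a + b := by
      calc b * (a * Ring.inverse b + 1) = a * (b * Ring.inverse b) + b := by ring
        _ = a + b := by rw [F.mul_inverse_cancel hb1 hb0, mul_one]
    have hbinv : b * ((a * Ring.inverse b + 1) * Ring.inverse (a + b)) = 1 := by
      rw [← mul_assoc, hsum, F.mul_inverse_cancel hab1 hab0]
    rw [inverse_eq' hbinv]
    exact A.mul_mem (A.add_mem hr A.one_mem) hinv
  rcases ha with rfl | ha
  · rw [zero_add]; exact hb
  · rcases hb with rfl | hb
    · rw [add_zero]; right; exact ha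
    · have ha0 : a ≠ 0 := fun h => ha (by rw [h, Ring.inverse_zero]; exact A.zero_mem)
      have hb0 : b ≠ 0 := fun h => hb (by rw [h, Ring.inverse_zero]; exact A.zero_mem)
      by_cases hab0 : a + b = 0
      · left; exact hab0
      · right
        intro hinv
        have hbinv : Ring.inverse b ∈ F.comp 1 := by
          have := F.inverse_mem' hb1 hb0; rwa [inv_one] at this
        have hr1 : a * Ring.inverse b ∈ F.comp 1 := by
          have := F.mul_mem ha1 hbinv; rwa [mul_one] at this
        have hr0 : a * Ring.inverse b ≠ 0 :=
          F.hmul_ne_zero ha1 hbinv ha0 (F.inverse_ne_zero' hb1 hb0)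
        rcases dich _ hr1 hr0 with hA | hA
        · exact hb (key a b ha1 hb1 ha0 hb0 hab0 hA hinv)
        · have hinvr : Ring.inverse (a * Ring.inverse b) = b * Ring.inverse a := by
            apply inverse_eq'
            calc (a * Ring.inverse b) * (b * Ring.inverse a)
                = (a * Ring.inverse a) * (b * Ring.inverse b) := by ring
              _ = 1 := by
                  rw [F.mul_inverse_cancel ha1 ha0, F.mul_inverse_cancel hb1 hb0, one_mul]
          rw [hinvr] at hA
          have hinv' : Ring.inverse (b + a) ∈ A := by rwa [add_comm] at hinv
          exact ha (key b a hb1 ha1 hb0 ha0 (by rwa [add_comm]) hA hinv')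

theorem sum_nonU (A : Subring K)
    (dich : ∀ x ∈ F.comp 1, x ≠ 0 → x ∈ A ∨ Ring.inverse x ∈ A)
    {ι : Type*} (s : Finset ι) (t : ι → K)
    (h : ∀ i ∈ s, t i ∈ F.comp 1 ∧ t i ∈ A ∧ (t i = 0 ∨ Ring.inverse (t i) ∉ A)) :
    (∑ i ∈ s, t i) ∈ F.comp 1 ∧ (∑ i ∈ s, t i) ∈ A ∧
      ((∑ i ∈ s, t i) = 0 ∨ Ring.inverse (∑ i ∈ s, t i) ∉ A) := by
  classical
  revert h
  induction s using Finset.induction_on with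
  | empty =>
    intro _
    refine ⟨by rw [Finset.sum_empty]; exact (F.comp 1).zero_mem,
      by rw [Finset.sum_empty]; exact A.zero_mem, Or.inl (Finset.sum_empty)⟩
  | @insert a s' hnotin ih =>
    intro h
    have hih := ih (fun i hi => h i (Finset.mem_insert_of_mem hi))
    have ha := h a (Finset.mem_insert_self a s')
    rw [Finset.sum_insert hnotin]
    exact ⟨(F.comp 1).add_mem ha.1 hih.1, A.add_mem ha.2.1 hih.2.1,
      F.add_nonU A dich ha.1 hih.1 ha.2.2 hih.2.2⟩

theorem exists_unit_ratio (A : Subring K)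
    (dich : ∀ x ∈ F.comp 1, x ≠ 0 → x ∈ A ∨ Ring.inverse x ∈ A)
    {ι : Type*} {g : H} (s : Finset ι) (f : ι → K)
    (hmem : ∀ i ∈ s, f i ∈ F.comp g ∧ f i ≠ 0) (hne : s.Nonempty)
    (hsum : ∑ i ∈ s, f i = 0) :
    ∃ k ∈ s, ∃ l ∈ s, k ≠ l ∧ f k * Ring.inverse (f l) ∈ A ∧
      Ring.inverse (f k * Ring.inverse (f l)) ∈ A := by
  classical
  obtain ⟨i₀, hi₀, hmin⟩ := F.exists_min A dich s f hne hmem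
  have hfi₀ := hmem i₀ hi₀
  have hTsum : ∑ k ∈ s.erase i₀, f k * Ring.inverse (f i₀) = -1 := by
    have h1 : ∑ k ∈ s.erase i₀, f k = -f i₀ := by
      have h2 := Finset.add_sum_erase s f hi₀
      rw [hsum] at h2
      rw [eq_neg_iff_add_eq_zero, add_comm]
      exact h2
    rw [← Finset.sum_mul, h1, neg_mul, F.mul_inverse_cancel hfi₀.1 hfi₀.2]
  by_contra hcon
  push_neg at hcon
  have hterms : ∀ k ∈ s.erase i₀, (f k * Ring.inverse (f i₀)) ∈ F.comp 1 ∧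
      (f k * Ring.inverse (f i₀)) ∈ A ∧
      ((f k * Ring.inverse (f i₀)) = 0 ∨ Ring.inverse (f k * Ring.inverse (f i₀)) ∉ A) := by
    intro k hk
    have hks : k ∈ s := Finset.mem_of_mem_erase hk
    have hfk := hmem k hks
    have hri : Ring.inverse (f i₀) ∈ F.comp g⁻¹ := F.inverse_mem' hfi₀.1 hfi₀.2
    refine ⟨by have := F.mul_mem hfk.1 hri; rwa [mul_inv_cancel] at this,
      hmin k hks, Or.inr ?_⟩
    exact hcon k hks i₀ hi₀ (Finset.mem_erase.1 hk).1 (hmin k hks)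
  obtain ⟨_, _, h3⟩ := F.sum_nonU A dich (s.erase i₀) _ hterms
  rw [hTsum] at h3
  rcases h3 with h0 | hnu
  · exact F.zero_ne_one (neg_eq_zero.1 h0).symm
  · apply hnu
    have hm : Ring.inverse (-1 : K) = -1 := inverse_eq' (by ring)
    rw [hm]; exact A.neg_mem A.one_mem

end GradedField
namespace GradedField

variable {H : Type*} [CommGroup H] [DecidableEq H] {K : Type*} [CommRing K] (F : GradedField H K)

theorem cross_cancel {g h : H} {x y : K} (hx : x ∈ F.comp g) (hy : y ∈ F.comp h)
    (hx0 : x ≠ 0) (hy0 : y ≠ 0) :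
    (x * Ring.inverse y) * (y * Ring.inverse x) = 1 := by
  calc (x * Ring.inverse y) * (y * Ring.inverse x)
      = (x * Ring.inverse x) * (y * Ring.inverse y) := by ring
    _ = 1 := by rw [F.mul_inverse_cancel hx hx0, F.mul_inverse_cancel hy hy0, one_mul]

theorem exists_pow_unit (L : Subring K) (hL : F.IsGradedSubfield L)
    (hfin : Module.rank ↥L K < Cardinal.aleph0) (A : Subring K)
    (dich : ∀ x ∈ F.comp 1, x ≠ 0 → x ∈ A ∨ Ring.inverse x ∈ A)
    {c : K} (hc : c ∈ F.comp 1) (hc0 : c ≠ 0) :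
    ∃ m : ℕ, 0 < m ∧ ∃ d w : K, d ∈ L ∧ d ∈ F.comp 1 ∧ d ≠ 0 ∧
      w ∈ A ∧ Ring.inverse w ∈ A ∧ w ∈ F.comp 1 ∧ w ≠ 0 ∧ c ^ m = d * w := by
  obtain ⟨N, a, haL, hsum, j, hj⟩ := exists_dep F.zero_ne_one L hfin c
  obtain ⟨g₀, hg₀⟩ := F.cmp_exists_ne_zero hj
  set b : Fin (N + 1) → K := fun i => F.cmp g₀ (a i) with hb
  have hcp : ∀ i : ℕ, c ^ i ∈ F.comp 1 := fun i => by
    have := F.pow_mem' hc i; rwa [one_pow] at this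
  have hcp0 : ∀ i : ℕ, c ^ i ≠ 0 := fun i => F.pow_ne_zero'' hc hc0 i
  have hbL : ∀ i, b i ∈ L := fun i => F.components_mem hL.graded (haL i) _
  have hbc : ∀ i : Fin (N + 1), b i ∈ F.comp g₀ := fun i => F.cmp_mem _ _
  have hkey : ∀ i : Fin (N + 1), b i * c ^ (i : ℕ) = F.cmp g₀ (a i * c ^ (i : ℕ)) := by
    intro i
    have := F.cmp_mul_homog (hcp (i : ℕ)) g₀ (a i)
    rw [mul_one] at this
    exact this.symm
  have hs0 : ∑ i, b i * c ^ (i : ℕ) = 0 := by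
    rw [Finset.sum_congr rfl fun i _ => hkey i]
    calc ∑ i, F.cmp g₀ (a i * c ^ (i : ℕ))
        = F.cmp g₀ (∑ i, a i * c ^ (i : ℕ)) := (map_sum (F.cmpHom g₀) _ _).symm
      _ = 0 := by rw [hsum, F.cmp_zero]
  classical
  set s : Finset (Fin (N + 1)) := Finset.univ.filter (fun i => b i ≠ 0) with hsdef
  have hbs : ∀ i ∈ s, b i ≠ 0 := fun i hi => (Finset.mem_filter.1 hi).2
  have hjs : j ∈ s := Finset.mem_filter.2 ⟨Finset.mem_univ _, hg₀⟩
  have hfsum : ∑ i ∈ s, b i * c ^ (i : ℕ) = 0 := by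
    have h5 : ∑ i ∈ Finset.univ.filter (fun i => b i ≠ 0), b i * c ^ (i : ℕ) =
        ∑ i : Fin (N + 1), b i * c ^ (i : ℕ) := by
      apply Finset.sum_filter_of_ne
      intro x _ hfx hbx
      exact hfx (by rw [hbx, zero_mul])
    rw [hsdef, h5, hs0]
  have hfc : ∀ i ∈ s, b i * c ^ (i : ℕ) ∈ F.comp g₀ ∧ b i * c ^ (i : ℕ) ≠ 0 := by
    intro i hi
    constructor
    · have := F.mul_mem (hbc i) (hcp (i : ℕ)); rwa [mul_one] at this
    · exact F.hmul_ne_zero (hbc i) (hcp (i : ℕ)) (hbs i hi) (hcp0 (i : ℕ))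
  obtain ⟨k, hks, l, hls, hkl, hWA, hWiA⟩ :=
    F.exists_unit_ratio A dich s (fun i => b i * c ^ (i : ℕ)) hfc ⟨j, hjs⟩ hfsum
  have main : ∀ k l : Fin (N + 1), k ∈ s → l ∈ s → (l : ℕ) < (k : ℕ) →
      (b k * c ^ (k : ℕ)) * Ring.inverse (b l * c ^ (l : ℕ)) ∈ A →
      Ring.inverse ((b k * c ^ (k : ℕ)) * Ring.inverse (b l * c ^ (l : ℕ))) ∈ A →
      ∃ m : ℕ, 0 < m ∧ ∃ d w : K, d ∈ L ∧ d ∈ F.comp 1 ∧ d ≠ 0 ∧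
        w ∈ A ∧ Ring.inverse w ∈ A ∧ w ∈ F.comp 1 ∧ w ≠ 0 ∧ c ^ m = d * w := by
    intro k l hks hls hlk hWA hWiA
    have hbk0 := hbs k hks
    have hbl0 := hbs l hls
    have hfk := hfc k hks
    have hfl := hfc l hls
    set W := (b k * c ^ (k : ℕ)) * Ring.inverse (b l * c ^ (l : ℕ)) with hWdef
    have hW1 : W ∈ F.comp 1 := by
      have := F.mul_mem hfk.1 (F.inverse_mem' hfl.1 hfl.2)
      rwa [mul_inv_cancel] at this
    have hW0 : W ≠ 0 :=
      F.hmul_ne_zero hfk.1 (F.inverse_mem' hfl.1 hfl.2) hfk.2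
        (F.inverse_ne_zero' hfl.1 hfl.2)
    refine ⟨(k : ℕ) - (l : ℕ), by omega, Ring.inverse (b k) * b l, W,
      L.mul_mem (hL.inv_mem _ (hbL k) ⟨g₀, hbc k⟩ hbk0) (hbL l), ?_, ?_, hWA, hWiA, hW1, hW0, ?_⟩
    · have := F.mul_mem (F.inverse_mem' (hbc k) hbk0) (hbc l)
      rwa [inv_mul_cancel] at this
    · exact F.hmul_ne_zero (F.inverse_mem' (hbc k) hbk0) (hbc l)
        (F.inverse_ne_zero' (hbc k) hbk0) hbl0
    · have hsplit : c ^ (k : ℕ) = c ^ ((k : ℕ) - (l : ℕ)) * c ^ (l : ℕ) := by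
        rw [← pow_add]; congr 1; omega
      have hstep : (Ring.inverse (b k) * b l) * W = c ^ ((k : ℕ) - (l : ℕ)) := by
        calc (Ring.inverse (b k) * b l) * W
            = (Ring.inverse (b k) * b l) *
              ((b k * c ^ (k : ℕ)) * (Ring.inverse (b l) * Ring.inverse (c ^ (l : ℕ)))) := by
              rw [hWdef, F.inverse_mul' (hbc l) (hcp (l : ℕ)) hbl0 (hcp0 (l : ℕ))]
          _ = (b k * Ring.inverse (b k)) * (b l * Ring.inverse (b l)) *
              (c ^ (k : ℕ) * Ring.inverse (c ^ (l : ℕ))) := by ring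
          _ = c ^ (k : ℕ) * Ring.inverse (c ^ (l : ℕ)) := by
              rw [F.mul_inverse_cancel (hbc k) hbk0, F.mul_inverse_cancel (hbc l) hbl0,
                one_mul, one_mul]
          _ = c ^ ((k : ℕ) - (l : ℕ)) := by
              rw [hsplit, mul_assoc, F.mul_inverse_cancel (hcp (l : ℕ)) (hcp0 (l : ℕ)),
                mul_one]
      exact hstep.symm
  have hkl' : (k : ℕ) ≠ (l : ℕ) := fun hc' => hkl (Fin.ext hc')
  rcases lt_or_gt_of_ne hkl' with hlt | hlt
  · -- (k:ℕ) < (l:ℕ) : swap using the inverse unit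
    have hfk := hfc k hks
    have hfl := hfc l hls
    have hinvW : Ring.inverse ((b k * c ^ (k : ℕ)) * Ring.inverse (b l * c ^ (l : ℕ))) =
        (b l * c ^ (l : ℕ)) * Ring.inverse (b k * c ^ (k : ℕ)) :=
      inverse_eq' (F.cross_cancel hfk.1 hfl.1 hfk.2 hfl.2)
    have h1 : (b l * c ^ (l : ℕ)) * Ring.inverse (b k * c ^ (k : ℕ)) ∈ A := by
      rw [← hinvW]; exact hWiA
    have h2 : Ring.inverse ((b l * c ^ (l : ℕ)) * Ring.inverse (b k * c ^ (k : ℕ))) ∈ A := by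
      have : Ring.inverse ((b l * c ^ (l : ℕ)) * Ring.inverse (b k * c ^ (k : ℕ))) =
          (b k * c ^ (k : ℕ)) * Ring.inverse (b l * c ^ (l : ℕ)) :=
        inverse_eq' (F.cross_cancel hfl.1 hfk.1 hfl.2 hfk.2)
      rw [this]; exact hWA
    exact main l k hls hks hlt h1 h2
  · exact main k l hks hls hlt hWA hWiA

theorem pow_eq_homogL_mul_unit (L : Subring K) (hL : F.IsGradedSubfield L)
    (hfin : Module.rank ↥L K < Cardinal.aleph0) (A : Subring K)
    (dich : ∀ x ∈ F.comp 1, x ≠ 0 → x ∈ A ∨ Ring.inverse x ∈ A)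
    {h : H} {u : K} (hu : u ∈ F.comp h) (hu0 : u ≠ 0) :
    ∃ Nn : ℕ, 0 < Nn ∧ ∃ z w : K, z ∈ L ∧ (∃ g, z ∈ F.comp g) ∧ z ≠ 0 ∧
      w ∈ A ∧ Ring.inverse w ∈ A ∧ w ∈ F.comp 1 ∧ w ≠ 0 ∧ u ^ Nn = z * w := by
  obtain ⟨n, hn, y, hyL, hyc, hy0⟩ := F.exists_pow_deg_L L hL hfin hu hu0
  have hiy := F.inverse_mem' hyc hy0
  set c := u ^ n * Ring.inverse y with hcdef
  have hc1 : c ∈ F.comp 1 := by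
    have := F.mul_mem (F.pow_mem' hu n) hiy
    rwa [mul_inv_cancel] at this
  have hc0 : c ≠ 0 := F.hmul_ne_zero (F.pow_mem' hu n) hiy (F.pow_ne_zero'' hu hu0 n)
    (F.inverse_ne_zero' hyc hy0)
  have hun : u ^ n = y * c := by
    rw [hcdef]
    calc u ^ n = u ^ n * 1 := (mul_one _).symm
      _ = u ^ n * (y * Ring.inverse y) := by rw [F.mul_inverse_cancel hyc hy0]
      _ = y * (u ^ n * Ring.inverse y) := by ring
  obtain ⟨m, hm, d, w, hdL, hd1, hd0, hwA, hiwA, hw1, hw0, hcm⟩ :=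
    F.exists_pow_unit L hL hfin A dich hc1 hc0
  refine ⟨n * m, Nat.mul_pos hn hm, y ^ m * d, w,
    L.mul_mem (L.pow_mem hyL m) hdL,
    ⟨(h ^ n) ^ m * 1, F.mul_mem (F.pow_mem' hyc m) hd1⟩,
    F.hmul_ne_zero (F.pow_mem' hyc m) hd1 (F.pow_ne_zero'' hyc hy0 m) hd0,
    hwA, hiwA, hw1, hw0, ?_⟩
  calc u ^ (n * m) = (u ^ n) ^ m := pow_mul u n m
    _ = (y * c) ^ m := by rw [hun]
    _ = y ^ m * c ^ m := mul_pow y c m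
    _ = y ^ m * (d * w) := by rw [hcm]
    _ = y ^ m * d * w := by ring

theorem mono_main (L : Subring K) (hL : F.IsGradedSubfield L)
    (hfin : Module.rank ↥L K < Cardinal.aleph0) {R R' A A' : Subring K}
    (hRR' : R ≤ R')
    (hA : F.IsGradedValRing ⊤ A) (hAL : A ⊓ L = R)
    (hA' : F.IsGradedValRing ⊤ A') (hA'L : A' ⊓ L = R')
    (h1 : A ⊓ F.oneComponent ≤ A' ⊓ F.oneComponent) : A ≤ A' := by
  have dichA : ∀ x ∈ F.comp 1, x ≠ 0 → x ∈ A ∨ Ring.inverse x ∈ A :=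
    fun x hx hx0 => hA.2.2 x (Subring.mem_top x) ⟨1, hx⟩ hx0
  apply F.le_of_homog_le hA.2.1
  intro u huA hhom
  by_cases hu0 : u = 0
  · subst hu0; exact A'.zero_mem
  obtain ⟨h, hu⟩ := hhom
  obtain ⟨Nn, hNn, z, w, hzL, hzhom, hz0, hwA, hiwA, hw1, hw0, hpow⟩ :=
    F.pow_eq_homogL_mul_unit L hL hfin A dichA hu hu0
  have hzA : z ∈ A := by
    rw [F.factor_eq hw1 hw0 hpow]
    exact A.mul_mem (A.pow_mem huA Nn) hiwA
  have hzR : z ∈ R := by rw [← hAL]; exact Subring.mem_inf.2 ⟨hzA, hzL⟩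
  have hzA' : z ∈ A' := by
    have hR'A' : R' ≤ A' := by rw [← hA'L]; exact inf_le_left
    exact hR'A' (hRR' hzR)
  have hwA' : w ∈ A' := (Subring.mem_inf.1 (h1 (Subring.mem_inf.2 ⟨hwA, hw1⟩))).1
  have hpowA' : u ^ Nn ∈ A' := by rw [hpow]; exact A'.mul_mem hzA' hwA'
  exact F.mem_of_pow_mem A' hu hu0 hNn hpowA' (hA'.2.2 u (Subring.mem_top u) ⟨h, hu⟩ hu0)

end GradedField
namespace GradedField

variable {H : Type*} [CommGroup H] [DecidableEq H] {K : Type*} [CommRing K] (F : GradedField H K)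

/-- The set of homogeneous elements that will generate the extension `A`. -/
def Pset (R B : Subring K) : Set K :=
  {u | (∃ h, u ∈ F.comp h) ∧ u ≠ 0 ∧ ∃ n : ℕ, 0 < n ∧ ∃ z w : K,
    z ∈ R ∧ (∃ g, z ∈ F.comp g) ∧ z ≠ 0 ∧ w ∈ B ∧ Ring.inverse w ∈ B ∧ w ≠ 0 ∧
    u ^ n = z * w}

theorem one_ne_zero'' (F : GradedField H K) : (1 : K) ≠ 0 := fun h => F.zero_ne_one h.symm

theorem Bsub_P (L : Subring K) (hL : F.IsGradedSubfield L)
    (hfin : Module.rank ↥L K < Cardinal.aleph0) (R B : Subring K)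
    (hBdich : ∀ x ∈ F.oneComponent, x ≠ 0 → x ∈ B ∨ Ring.inverse x ∈ B)
    (hB : B ≤ F.oneComponent)
    (hBR : B ⊓ (F.oneComponent ⊓ L) = R ⊓ F.oneComponent)
    {c : K} (hc : c ∈ B) (hc0 : c ≠ 0) : c ∈ F.Pset R B := by
  have dichB : ∀ x ∈ F.comp 1, x ≠ 0 → x ∈ B ∨ Ring.inverse x ∈ B :=
    fun x hx hx0 => hBdich x hx hx0
  have hc1 : c ∈ F.comp 1 := hB hc
  obtain ⟨m, hm, d, w, hdL, hd1, hd0, hwB, hiwB, hw1, hw0, hcm⟩ :=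
    F.exists_pow_unit L hL hfin B dichB hc1 hc0
  have hdB : d ∈ B := by
    rw [F.factor_eq hw1 hw0 hcm]
    exact B.mul_mem (B.pow_mem hc m) hiwB
  have hdR : d ∈ R := by
    have hmem : d ∈ B ⊓ (F.oneComponent ⊓ L) :=
      Subring.mem_inf.2 ⟨hdB, Subring.mem_inf.2 ⟨hd1, hdL⟩⟩
    rw [hBR] at hmem
    exact (Subring.mem_inf.1 hmem).1
  exact ⟨⟨1, hc1⟩, hc0, m, hm, d, w, hdR, ⟨1, hd1⟩, hd0, hwB, hiwB, hw0, hcm⟩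

theorem Pset_mul (R B : Subring K) (hBs : B ≤ F.oneComponent) {u v : K}
    (hu : u ∈ F.Pset R B) (hv : v ∈ F.Pset R B) : u * v ∈ F.Pset R B := by
  obtain ⟨⟨h, huh⟩, hu0, n, hn, z, w, hzR, ⟨g, hzg⟩, hz0, hwB, hiwB, hw0, hzw⟩ := hu
  obtain ⟨⟨h', hvh⟩, hv0, n', hn', z', w', hz'R, ⟨g', hz'g⟩, hz'0, hw'B, hiw'B, hw'0, hz'w'⟩ := hv
  have hw1 : w ∈ F.comp 1 := hBs hwB
  have hw'1 : w' ∈ F.comp 1 := hBs hw'B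
  have hwp1 : w ^ n' ∈ F.comp 1 := by have := F.pow_mem' hw1 n'; rwa [one_pow] at this
  have hw'p1 : w' ^ n ∈ F.comp 1 := by have := F.pow_mem' hw'1 n; rwa [one_pow] at this
  refine ⟨⟨h * h', F.mul_mem huh hvh⟩, F.hmul_ne_zero huh hvh hu0 hv0, n * n',
    Nat.mul_pos hn hn', z ^ n' * z' ^ n, w ^ n' * w' ^ n,
    R.mul_mem (R.pow_mem hzR n') (R.pow_mem hz'R n),
    ⟨g ^ n' * g' ^ n, F.mul_mem (F.pow_mem' hzg n') (F.pow_mem' hz'g n)⟩,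
    F.hmul_ne_zero (F.pow_mem' hzg n') (F.pow_mem' hz'g n)
      (F.pow_ne_zero'' hzg hz0 n') (F.pow_ne_zero'' hz'g hz'0 n),
    B.mul_mem (B.pow_mem hwB n') (B.pow_mem hw'B n), ?_,
    F.hmul_ne_zero hwp1 hw'p1 (F.pow_ne_zero'' hw1 hw0 n') (F.pow_ne_zero'' hw'1 hw'0 n), ?_⟩
  · rw [F.inverse_mul' hwp1 hw'p1 (F.pow_ne_zero'' hw1 hw0 n') (F.pow_ne_zero'' hw'1 hw'0 n),
      F.inverse_pow' hw1 hw0 n', F.inverse_pow' hw'1 hw'0 n]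
    exact B.mul_mem (B.pow_mem hiwB n') (B.pow_mem hiw'B n)
  · calc (u * v) ^ (n * n') = u ^ (n * n') * v ^ (n * n') := mul_pow u v _
      _ = (u ^ n) ^ n' * (v ^ n') ^ n := by
          rw [pow_mul u n n', Nat.mul_comm n n', pow_mul v n' n]
      _ = (z * w) ^ n' * (z' * w') ^ n := by rw [hzw, hz'w']
      _ = (z ^ n' * z' ^ n) * (w ^ n' * w' ^ n) := by
          rw [mul_pow z w, mul_pow z' w']; ring

theorem Pset_one (R B : Subring K) : (1 : K) ∈ F.Pset R B :=
  ⟨⟨1, F.one_mem⟩, (one_ne_zero'' F), 1, Nat.one_pos, 1, 1, R.one_mem, ⟨1, F.one_mem⟩,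
    (one_ne_zero'' F), B.one_mem, by rw [Ring.inverse_one]; exact B.one_mem,
    (one_ne_zero'' F), by rw [pow_one, mul_one]⟩

theorem Pset_dich (L : Subring K) (hL : F.IsGradedSubfield L)
    (hfin : Module.rank ↥L K < Cardinal.aleph0) (R : Subring K)
    (hR : F.IsGradedValRing L R) (B : Subring K)
    (hBdich : ∀ x ∈ F.oneComponent, x ≠ 0 → x ∈ B ∨ Ring.inverse x ∈ B)
    {u : K} (hhom : ∃ h, u ∈ F.comp h) (hu0 : u ≠ 0) :
    u ∈ F.Pset R B ∨ Ring.inverse u ∈ F.Pset R B := by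
  have dichB : ∀ x ∈ F.comp 1, x ≠ 0 → x ∈ B ∨ Ring.inverse x ∈ B :=
    fun x hx hx0 => hBdich x hx hx0
  obtain ⟨h, hu⟩ := hhom
  obtain ⟨N, hN, z, w, hzL, hzhom, hz0, hwB, hiwB, hw1, hw0, hpow⟩ :=
    F.pow_eq_homogL_mul_unit L hL hfin B dichB hu hu0
  obtain ⟨g, hzg⟩ := hzhom
  rcases hR.2.2 z hzL ⟨g, hzg⟩ hz0 with hzR | hzIR
  · exact Or.inl ⟨⟨h, hu⟩, hu0, N, hN, z, w, hzR, ⟨g, hzg⟩, hz0, hwB, hiwB, hw0, hpow⟩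
  · right
    refine ⟨⟨h⁻¹, F.inverse_mem' hu hu0⟩, F.inverse_ne_zero' hu hu0, N, hN,
      Ring.inverse z, Ring.inverse w, hzIR, ⟨g⁻¹, F.inverse_mem' hzg hz0⟩,
      F.inverse_ne_zero' hzg hz0, hiwB, ?_, F.inverse_ne_zero' hw1 hw0, ?_⟩
    · rw [F.inverse_inverse' hw1 hw0]; exact hwB
    · rw [← F.inverse_pow' hu hu0 N, hpow, F.inverse_mul' hzg hw1 hz0 hw0]

theorem Pset_add_same (L : Subring K) (hL : F.IsGradedSubfield L)
    (hfin : Module.rank ↥L K < Cardinal.aleph0) (R B : Subring K)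
    (hB : B ≤ F.oneComponent)
    (hBdich : ∀ x ∈ F.oneComponent, x ≠ 0 → x ∈ B ∨ Ring.inverse x ∈ B)
    (hBR : B ⊓ (F.oneComponent ⊓ L) = R ⊓ F.oneComponent)
    {g : H} {p q : K} (hpg : p ∈ F.comp g) (hqg : q ∈ F.comp g)
    (hp : p = 0 ∨ p ∈ F.Pset R B) (hq : q = 0 ∨ q ∈ F.Pset R B) :
    p + q = 0 ∨ p + q ∈ F.Pset R B := by
  have key : ∀ p q : K, p ∈ F.Pset R B → q ∈ F.Pset R B → p ∈ F.comp g → q ∈ F.comp g →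
      p + q ≠ 0 → q * Ring.inverse p ∈ B → p + q ∈ F.Pset R B := by
    intro p q hp hq hpg hqg hpq0 hqp
    have hp0 : p ≠ 0 := hp.2.1
    have hsum : p + q = p * (1 + q * Ring.inverse p) := by
      have : p * (1 + q * Ring.inverse p) = p + q * (p * Ring.inverse p) := by ring
      rw [this, F.mul_inverse_cancel hpg hp0, mul_one]
    have h1r : (1 + q * Ring.inverse p) ∈ B := B.add_mem B.one_mem hqp
    have hne : (1 + q * Ring.inverse p) ≠ 0 := by
      intro h0
      rw [hsum, h0, mul_zero] at hpq0
      exact hpq0 rfl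
    have h1P : (1 + q * Ring.inverse p) ∈ F.Pset R B :=
      F.Bsub_P L hL hfin R B hBdich hB hBR h1r hne
    rw [hsum]
    exact F.Pset_mul R B hB hp h1P
  rcases hp with rfl | hp
  · rw [zero_add]; exact hq
  rcases hq with rfl | hq
  · rw [add_zero]; right; exact hp
  by_cases hpq0 : p + q = 0
  · exact Or.inl hpq0
  right
  have hp0 : p ≠ 0 := hp.2.1
  have hq0 : q ≠ 0 := hq.2.1
  have hip := F.inverse_mem' hpg hp0
  have hr1 : q * Ring.inverse p ∈ F.comp 1 := by
    have := F.mul_mem hqg hip; rwa [mul_inv_cancel] at this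
  have hr0 : q * Ring.inverse p ≠ 0 :=
    F.hmul_ne_zero hqg hip hq0 (F.inverse_ne_zero' hpg hp0)
  rcases hBdich _ hr1 hr0 with hrB | hrB
  · exact key p q hp hq hpg hqg hpq0 hrB
  · have hinv : Ring.inverse (q * Ring.inverse p) = p * Ring.inverse q :=
      inverse_eq' (F.cross_cancel hqg hpg hq0 hp0)
    rw [hinv] at hrB
    rw [add_comm]
    exact key q p hq hp hqg hpg (by rwa [add_comm]) hrB

end GradedField
namespace GradedField

variable {H : Type*} [CommGroup H] [DecidableEq H] {K : Type*} [CommRing K] (F : GradedField H K)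

theorem surj_main (L : Subring K) (hL : F.IsGradedSubfield L)
    (hfin : Module.rank ↥L K < Cardinal.aleph0) (R : Subring K)
    (hR : F.IsGradedValRing L R) (B : Subring K) (hB : B ≤ F.oneComponent)
    (hBdich : ∀ x ∈ F.oneComponent, x ≠ 0 → x ∈ B ∨ Ring.inverse x ∈ B)
    (hBR : B ⊓ (F.oneComponent ⊓ L) = R ⊓ F.oneComponent) :
    ∃ A : Subring K, (F.IsGradedValRing ⊤ A ∧ A ⊓ L = R) ∧ A ⊓ F.oneComponent = B := by
  classical
  set P : Set K := F.Pset R B with hPdef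
  set C : Set K := {x | ∀ g, F.cmp g x = 0 ∨ F.cmp g x ∈ P} with hCdef
  have hCzero : (0 : K) ∈ C := fun g => Or.inl (F.cmp_zero g)
  have hCadd : ∀ {x y : K}, x ∈ C → y ∈ C → x + y ∈ C := by
    intro x y hx hy g
    rw [F.cmp_add]
    have := F.Pset_add_same L hL hfin R B hB hBdich hBR (F.cmp_mem g x) (F.cmp_mem g y)
      ((hx g).imp id id) ((hy g).imp id id)
    exact this
  have hm1P : (-1 : K) ∈ P := by
    apply F.Bsub_P L hL hfin R B hBdich hB hBR (B.neg_mem B.one_mem)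
    intro h0
    exact F.zero_ne_one (neg_eq_zero.1 h0).symm
  have hCneg : ∀ {x : K}, x ∈ C → -x ∈ C := by
    intro x hx g
    rw [F.cmp_neg]
    rcases hx g with h0 | hPm
    · left; rw [h0, neg_zero]
    · right
      have heq : -F.cmp g x = F.cmp g x * (-1) := by ring
      rw [heq]
      exact F.Pset_mul R B hB hPm hm1P
  have hPC : ∀ u ∈ P, u ∈ C := by
    intro u hu g
    obtain ⟨h, huh⟩ := hu.1
    by_cases hg : h = g
    · subst hg; right; rw [F.cmp_of_mem_same huh]; exact hu
    · left; exact F.cmp_of_mem_ne huh hg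
  have hCcl : ∀ x ∈ C, x ∈ AddSubgroup.closure P := by
    intro x hx
    obtain ⟨sF, hsF⟩ := F.exists_sum_cmp x
    rw [hsF]
    apply AddSubgroup.sum_mem
    intro g hg
    rcases hx g with h0 | hPm
    · rw [h0]; exact AddSubgroup.zero_mem _
    · exact AddSubgroup.subset_closure hPm
  set Csub : AddSubgroup K :=
    { carrier := C
      zero_mem' := hCzero
      add_mem' := hCadd
      neg_mem' := hCneg } with hCsub
  have hCmul : ∀ x ∈ C, ∀ y ∈ C, x * y ∈ C := by
    have hstep : ∀ u ∈ P, ∀ y ∈ C, u * y ∈ C := by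
      intro u hu y hy
      have hTy : AddSubgroup.closure P ≤
          { carrier := {v : K | u * v ∈ C}
            zero_mem' := by show u * 0 ∈ C; rw [mul_zero]; exact hCzero
            add_mem' := fun {a b} ha hb => by
              show u * (a + b) ∈ C; rw [mul_add]; exact hCadd ha hb
            neg_mem' := fun {a} ha => by
              show u * (-a) ∈ C; rw [mul_neg]; exact hCneg ha } :=
        (AddSubgroup.closure_le _).2 (fun v hv => hPC _ (F.Pset_mul R B hB hu hv))
      exact hTy (hCcl y hy)
    intro x hx y hy
    have hTx : AddSubgroup.closure P ≤
        { carrier := {v : K | v * y ∈ C}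
          zero_mem' := by show (0 : K) * y ∈ C; rw [zero_mul]; exact hCzero
          add_mem' := fun {a b} ha hb => by
            show (a + b) * y ∈ C; rw [add_mul]; exact hCadd ha hb
          neg_mem' := fun {a} ha => by
            show (-a) * y ∈ C; rw [neg_mul]; exact hCneg ha } :=
      (AddSubgroup.closure_le _).2 (fun u hu => hstep u hu y hy)
    exact hTx (hCcl x hx)
  set A : Subring K :=
    { carrier := C
      zero_mem' := hCzero
      add_mem' := hCadd
      neg_mem' := hCneg
      one_mem' := hPC 1 (F.Pset_one R B)
      mul_mem' := fun {a b} ha hb => hCmul a ha b hb } with hAdef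
  have hPA : ∀ u ∈ P, u ∈ A := hPC
  have hmemA : ∀ x : K, x ∈ A ↔ ∀ g, F.cmp g x = 0 ∨ F.cmp g x ∈ P := fun x => Iff.rfl
  have hgraded : F.IsGradedSubring A := by
    intro x hx
    have h1 : x ∈ AddSubgroup.closure P := hCcl x hx
    have h2 : P ⊆ {y : K | y ∈ A ∧ F.Homogeneous y} :=
      fun u hu => ⟨hPA u hu, ⟨_, hu.1.choose_spec⟩⟩
    exact AddSubgroup.closure_mono h2 h1
  have hdich : ∀ x ∈ (⊤ : Subring K), F.Homogeneous x → x ≠ 0 →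
      (x ∈ A ∨ Ring.inverse x ∈ A) := by
    intro x _ hhom hx0
    rcases F.Pset_dich L hL hfin R hR B hBdich hhom hx0 with hP | hP
    · exact Or.inl (hPA _ hP)
    · exact Or.inr (hPA _ hP)
  have hALR : A ⊓ L = R := by
    apply le_antisymm
    · intro x hx
      obtain ⟨hxA, hxL⟩ := Subring.mem_inf.1 hx
      have hcompR : ∀ g, F.cmp g x ∈ R := by
        intro g
        have hcL : F.cmp g x ∈ L := F.components_mem hL.graded hxL g
        rcases (hmemA x).1 hxA g with h0 | hPm
        · rw [h0]; exact R.zero_mem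
        · obtain ⟨⟨h, huh⟩, hu0, n, hn, z, w, hzR, ⟨g', hzg⟩, hz0, hwB, hiwB, hw0, hzw⟩ := hPm
          have hw1 : w ∈ F.comp 1 := hB hwB
          have hwL : w ∈ L := by
            have hwe : w = F.cmp g x ^ n * Ring.inverse z :=
              F.factor_eq hzg hz0 (by rw [hzw, mul_comm])
            rw [hwe]
            exact L.mul_mem (L.pow_mem hcL n) (hL.inv_mem z (hR.1 hzR) ⟨g', hzg⟩ hz0)
          have hwR : w ∈ R := by
            have hmem : w ∈ B ⊓ (F.oneComponent ⊓ L) :=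
              Subring.mem_inf.2 ⟨hwB, Subring.mem_inf.2 ⟨hw1, hwL⟩⟩
            rw [hBR] at hmem
            exact (Subring.mem_inf.1 hmem).1
          have hiwL : Ring.inverse w ∈ L := hL.inv_mem w hwL ⟨1, hw1⟩ hw0
          have hiwR : Ring.inverse w ∈ R := by
            have hiw1 : Ring.inverse w ∈ F.comp 1 := by
              have := F.inverse_mem' hw1 hw0; rwa [inv_one] at this
            have hmem : Ring.inverse w ∈ B ⊓ (F.oneComponent ⊓ L) :=
              Subring.mem_inf.2 ⟨hiwB, Subring.mem_inf.2 ⟨hiw1, hiwL⟩⟩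
            rw [hBR] at hmem
            exact (Subring.mem_inf.1 hmem).1
          have hpowR : F.cmp g x ^ n ∈ R := by rw [hzw]; exact R.mul_mem hzR hwR
          exact F.mem_of_pow_mem R huh hu0 hn hpowR (hR.2.2 _ hcL ⟨h, huh⟩ hu0)
      obtain ⟨sF, hsF⟩ := F.exists_sum_cmp x
      rw [hsF]
      exact Subring.sum_mem R (fun g _ => hcompR g)
    · intro x hx
      refine Subring.mem_inf.2 ⟨?_, hR.1 hx⟩
      revert x
      apply F.le_of_homog_le hR.2.1
      intro y hyR ⟨h, hy⟩
      by_cases hy0 : y = 0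
      · subst hy0; exact A.zero_mem
      · exact hPA y ⟨⟨h, hy⟩, hy0, 1, Nat.one_pos, y, 1, hyR, ⟨h, hy⟩, hy0, B.one_mem,
          by rw [Ring.inverse_one]; exact B.one_mem, F.one_ne_zero'' ,
          by rw [pow_one, mul_one]⟩
  have hAK : A ⊓ F.oneComponent = B := by
    apply le_antisymm
    · intro x hx
      obtain ⟨hxA, hx1⟩ := Subring.mem_inf.1 hx
      have hx1' : x ∈ F.comp 1 := hx1
      rcases (hmemA x).1 hxA 1 with h0 | hPm
      · rw [F.cmp_of_mem_same hx1'] at h0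
        rw [h0]; exact B.zero_mem
      · rw [F.cmp_of_mem_same hx1'] at hPm
        obtain ⟨⟨h, huh⟩, hu0, n, hn, z, w, hzR, ⟨g', hzg⟩, hz0, hwB, hiwB, hw0, hzw⟩ := hPm
        have hw1 : w ∈ F.comp 1 := hB hwB
        have hz1 : z ∈ F.comp 1 := by
          have hxn : x ^ n ∈ F.comp 1 := by
            have := F.pow_mem' hx1' n; rwa [one_pow] at this
          have hiw1 : Ring.inverse w ∈ F.comp 1 := by
            have := F.inverse_mem' hw1 hw0; rwa [inv_one] at this
          have hze : z = x ^ n * Ring.inverse w := F.factor_eq hw1 hw0 hzw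
          rw [hze]
          have := F.mul_mem hxn hiw1; rwa [mul_one] at this
        have hzB : z ∈ B := by
          have hmem : z ∈ R ⊓ F.oneComponent := Subring.mem_inf.2 ⟨hzR, hz1⟩
          rw [← hBR] at hmem
          exact (Subring.mem_inf.1 hmem).1
        have hpowB : x ^ n ∈ B := by rw [hzw]; exact B.mul_mem hzB hwB
        exact F.mem_of_pow_mem B hx1' hu0 hn hpowB (hBdich x hx1 hu0)
    · intro x hxB
      refine Subring.mem_inf.2 ⟨?_, hB hxB⟩
      by_cases hx0 : x = 0
      · subst hx0; exact A.zero_mem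
      · exact hPA x (F.Bsub_P L hL hfin R B hBdich hB hBR hxB hx0)
  exact ⟨A, ⟨⟨le_top, hgraded, hdich⟩, hALR⟩, hAK⟩

end GradedField
/-- Let `K/L` be a finite extension of `H`-graded fields and `R` a graded valuation ring of
`L`.  Then `A ↦ A₁ = A ∩ K₁` is a bijection from graded valuation rings of `K` extending `R`
to valuation rings of the field `K₁` extending `R₁ = R ∩ L₁`; moreover for `R ⊆ R'` with
respective extensions `A`, `A'`, one has `A ⊆ A'` iff `A₁ ⊆ A'₁`. -/
theorem GradedField.extension_bijection_oneComponent {H : Type*} [CommGroup H]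
    [DecidableEq H] {K : Type*} [CommRing K] (F : GradedField H K) (L : Subring K)
    (hL : F.IsGradedSubfield L) (hfin : Module.rank ↥L K < Cardinal.aleph0)
    (R : Subring K) (hR : F.IsGradedValRing L R) :
    -- `A ↦ A₁` lands in valuation rings of `K₁` extending `R₁`
    (∀ A : Subring K, F.IsGradedValRing ⊤ A ∧ A ⊓ L = R →
      (A ⊓ F.oneComponent ≤ F.oneComponent ∧
        (∀ x ∈ F.oneComponent, x ≠ 0 → x ∈ A ⊓ F.oneComponent ∨
          Ring.inverse x ∈ A ⊓ F.oneComponent) ∧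
        (A ⊓ F.oneComponent) ⊓ (F.oneComponent ⊓ L) = R ⊓ F.oneComponent)) ∧
    -- injectivity
    (∀ A A' : Subring K, F.IsGradedValRing ⊤ A ∧ A ⊓ L = R →
      F.IsGradedValRing ⊤ A' ∧ A' ⊓ L = R →
      A ⊓ F.oneComponent = A' ⊓ F.oneComponent → A = A') ∧
    -- surjectivity
    (∀ B : Subring K, B ≤ F.oneComponent →
      (∀ x ∈ F.oneComponent, x ≠ 0 → x ∈ B ∨ Ring.inverse x ∈ B) →
      B ⊓ (F.oneComponent ⊓ L) = R ⊓ F.oneComponent →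
      ∃ A : Subring K, (F.IsGradedValRing ⊤ A ∧ A ⊓ L = R) ∧ A ⊓ F.oneComponent = B) ∧
    -- monotonicity is detected on identity components
    (∀ R' : Subring K, F.IsGradedValRing L R' → R ≤ R' →
      ∀ A A' : Subring K, F.IsGradedValRing ⊤ A ∧ A ⊓ L = R →
        F.IsGradedValRing ⊤ A' ∧ A' ⊓ L = R' →
        (A ≤ A' ↔ A ⊓ F.oneComponent ≤ A' ⊓ F.oneComponent)) := by
  refine ⟨?_, ?_, ?_, ?_⟩
  · -- lands in valuation rings of K₁ extending R₁
    rintro A ⟨hA, hAL⟩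
    refine ⟨inf_le_right, ?_, ?_⟩
    · intro x hx1 hx0
      rcases hA.2.2 x (Subring.mem_top x) ⟨1, hx1⟩ hx0 with h | h
      · exact Or.inl (Subring.mem_inf.2 ⟨h, hx1⟩)
      · refine Or.inr (Subring.mem_inf.2 ⟨h, ?_⟩)
        have := F.inverse_mem' (F.mem_oneComponent.1 hx1) hx0
        rwa [inv_one] at this
    · ext x
      simp only [Subring.mem_inf]
      constructor
      · rintro ⟨⟨hxA, hx1⟩, _, hxL⟩
        refine ⟨?_, hx1⟩
        rw [← hAL]
        exact Subring.mem_inf.2 ⟨hxA, hxL⟩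
      · rintro ⟨hxR, hx1⟩
        have hx : x ∈ A ⊓ L := by rw [hAL]; exact hxR
        obtain ⟨hxA, hxL⟩ := Subring.mem_inf.1 hx
        exact ⟨⟨hxA, hx1⟩, hx1, hxL⟩
  · -- injectivity
    rintro A A' ⟨hA, hAL⟩ ⟨hA', hA'L⟩ heq
    exact le_antisymm
      (F.mono_main L hL hfin le_rfl hA hAL hA' hA'L (le_of_eq heq))
      (F.mono_main L hL hfin le_rfl hA' hA'L hA hAL (le_of_eq heq.symm))
  · -- surjectivity
    intro B hB hBdich hBR
    exact F.surj_main L hL hfin R hR B hB hBdich hBR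
  · -- monotonicity detected on identity components
    rintro R' hR' hRR' A A' ⟨hA, hAL⟩ ⟨hA', hA'L⟩
    constructor
    · intro hle
      exact inf_le_inf_right _ hle
    · intro h1
      exact F.mono_main L hL hfin hRR' hA hAL hA' hA'L h1
end ZR
end

section
/- Let K/k be an extension of H-graded fields and P_{K/k} the set of graded valuation rings O of K with k ⊆ O and graded fraction field K. Endow P_{K/k} with the constructible topology, generated by the sets P{F}∖{G} = {O : F ⊆ O and G ∩ O = ∅} for finite subsets F, G of K^× (the homogeneous units). Then for arbitrary (possibly infinite) subsets F, G ⊆ K^×, the subset {O ∈ P_{K/k} : F ⊆ O, G ∩ O = ∅} is compact and Hausdorff in the constructible topology. -/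
open scoped DirectSum

section ZR

variable {H : Type*} [CommGroup H] [DecidableEq H] {K : Type*} [CommRing K]

section AuxProof
open Topology

theorem isClosed_eval {ι : Type*} (x : ι) (b : Bool) :
    IsClosed {φ : ι → Bool | φ x = b} :=
  isClosed_eq (continuous_apply x) continuous_const

theorem isOpen_eval {ι : Type*} (x : ι) (b : Bool) :
    IsOpen {φ : ι → Bool | φ x = b} := by
  have : {φ : ι → Bool | φ x = b} = (fun φ : ι → Bool => φ x) ⁻¹' {b} := rfl
  rw [this]
  exact (continuous_apply x).isOpen_preimage _ (isOpen_discrete _)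

theorem isClosed_imp_list {ι : Type*} (l : List ι) (y : ι) :
    IsClosed {φ : ι → Bool | (∀ x ∈ l, φ x = true) → φ y = true} := by
  have h : {φ : ι → Bool | (∀ x ∈ l, φ x = true) → φ y = true}
      = {φ : ι → Bool | φ y = true} ∪ ⋃ x ∈ l, {φ : ι → Bool | φ x = false} := by
    ext φ
    simp only [Set.mem_setOf_eq, Set.mem_union, Set.mem_iUnion, exists_prop]
    constructor
    · intro h
      by_cases hc : ∀ x ∈ l, φ x = true
      · exact Or.inl (h hc)
      · push_neg at hc
        obtain ⟨x, hx, hx'⟩ := hc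
        exact Or.inr ⟨x, hx, by simpa using hx'⟩
    · rintro (h | ⟨x, hxl, hx⟩) hall
      · exact h
      · rw [hall x hxl] at hx; exact absurd hx (by simp)
  rw [h]
  exact (isClosed_eval y true).union
    (Set.Finite.isClosed_biUnion l.finite_toSet fun x _ => isClosed_eval x false)

theorem list_sum_map_neg {R : Type*} [CommRing R] (l : List R) :
    (l.map (fun x => -x)).sum = -l.sum := by
  induction l with
  | nil => simp
  | cons a t ih => simp [ih, neg_add, add_comm]

theorem Ring.inverse_eq_of_mul_eq_one' {K : Type*} [CommRing K] {x y : K}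
    (h : x * y = 1) : Ring.inverse x = y := by
  have hu : IsUnit x := IsUnit.of_mul_eq_one y h
  calc Ring.inverse x = Ring.inverse x * (x * y) := by rw [h, mul_one]
    _ = Ring.inverse x * x * y := by ring
    _ = y := by rw [Ring.inverse_mul_cancel x hu, one_mul]

namespace GradedField

variable {H : Type*} [CommGroup H] [DecidableEq H] {K : Type*} [CommRing K]
variable (F : GradedField H K)

theorem homogeneous_zero : F.Homogeneous (0 : K) := ⟨1, (F.comp 1).zero_mem⟩

theorem homogeneous_one : F.Homogeneous (1 : K) := ⟨1, F.one_mem⟩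

theorem homogeneous_mul {x y : K} (hx : F.Homogeneous x) (hy : F.Homogeneous y) :
    F.Homogeneous (x * y) := by
  obtain ⟨g, hg⟩ := hx; obtain ⟨h, hh⟩ := hy
  exact ⟨g * h, F.mul_mem hg hh⟩

theorem homogeneous_neg {x : K} (hx : F.Homogeneous x) : F.Homogeneous (-x) := by
  obtain ⟨g, hg⟩ := hx
  exact ⟨g, (F.comp g).neg_mem hg⟩

include F in
theorem one_ne_zero' : (1 : K) ≠ 0 := fun h => F.zero_ne_one h.symm

include F in
theorem neg_one_ne_zero' : (-1 : K) ≠ 0 := by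
  intro h
  apply F.one_ne_zero'
  rw [← neg_neg (1 : K), h, neg_zero]

theorem mul_ne_zero' {x y : K} (hx : F.Homogeneous x) (hy : F.Homogeneous y)
    (hx0 : x ≠ 0) (hy0 : y ≠ 0) : x * y ≠ 0 := by
  obtain ⟨g, hg⟩ := hx; obtain ⟨h, hh⟩ := hy
  obtain ⟨x', _, hxx'⟩ := F.inv_mem hg hx0
  obtain ⟨y', _, hyy'⟩ := F.inv_mem hh hy0
  intro h0
  apply F.zero_ne_one
  calc (0 : K) = x * y * (x' * y') := by rw [h0, zero_mul]
    _ = (x * x') * (y * y') := by ring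
    _ = 1 := by rw [hxx', hyy', one_mul]

/-- The conditions cutting out the image of `{O | Fs ⊆ O, Gs ∩ O = ∅}` under `chi`. -/
def cond (k₀ : Subring K) (Fs Gs : Set K) (φ : F.HomogUnits → Bool) : Prop :=
  (∀ x : F.HomogUnits, x.1 ∈ k₀ → φ x = true) ∧
  (∀ x y z : F.HomogUnits, z.1 = x.1 * y.1 → φ x = true → φ y = true → φ z = true) ∧
  (∀ (y : F.HomogUnits) (l : List F.HomogUnits),
      y.1 = (l.map Subtype.val).sum → (∀ x ∈ l, φ x = true) → φ y = true) ∧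
  (∀ x y : F.HomogUnits, x.1 * y.1 = 1 → (φ x = true ∨ φ y = true)) ∧
  (∀ x : F.HomogUnits, x.1 ∈ Fs → φ x = true) ∧
  (∀ x : F.HomogUnits, x.1 ∈ Gs → φ x = false)

theorem isClosed_cond (k₀ : Subring K) (Fs Gs : Set K) :
    IsClosed {φ : F.HomogUnits → Bool | F.cond k₀ Fs Gs φ} := by
  simp only [cond, Set.setOf_and]
  refine IsClosed.inter ?_ (IsClosed.inter ?_ (IsClosed.inter ?_
    (IsClosed.inter ?_ (IsClosed.inter ?_ ?_))))
  · rw [Set.setOf_forall]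
    refine isClosed_iInter fun x => ?_
    by_cases hx : x.1 ∈ k₀
    · have : {φ : F.HomogUnits → Bool | x.1 ∈ k₀ → φ x = true} = {φ | φ x = true} := by
        ext φ; simp [hx]
      rw [this]; exact isClosed_eval x true
    · have : {φ : F.HomogUnits → Bool | x.1 ∈ k₀ → φ x = true} = Set.univ := by
        ext φ; simp [hx]
      rw [this]; exact isClosed_univ
  · rw [Set.setOf_forall]
    refine isClosed_iInter fun x => ?_
    rw [Set.setOf_forall]
    refine isClosed_iInter fun y => ?_
    rw [Set.setOf_forall]
    refine isClosed_iInter fun z => ?_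
    by_cases h : z.1 = x.1 * y.1
    · have : {φ : F.HomogUnits → Bool | z.1 = x.1 * y.1 → φ x = true → φ y = true → φ z = true}
          = {φ | (∀ w ∈ [x, y], φ w = true) → φ z = true} := by
        ext φ; simp [h]
      rw [this]; exact isClosed_imp_list [x, y] z
    · have : {φ : F.HomogUnits → Bool | z.1 = x.1 * y.1 → φ x = true → φ y = true → φ z = true}
          = Set.univ := by
        ext φ; simp [h]
      rw [this]; exact isClosed_univ
  · rw [Set.setOf_forall]
    refine isClosed_iInter fun y => ?_
    rw [Set.setOf_forall]
    refine isClosed_iInter fun l => ?_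
    by_cases h : y.1 = (l.map Subtype.val).sum
    · have : {φ : F.HomogUnits → Bool |
            y.1 = (l.map Subtype.val).sum → (∀ x ∈ l, φ x = true) → φ y = true}
          = {φ | (∀ x ∈ l, φ x = true) → φ y = true} := by
        ext φ
        simp only [Set.mem_setOf_eq]
        exact ⟨fun hh => hh h, fun hh _ => hh⟩
      rw [this]; exact isClosed_imp_list l y
    · have : {φ : F.HomogUnits → Bool |
            y.1 = (l.map Subtype.val).sum → (∀ x ∈ l, φ x = true) → φ y = true}
          = Set.univ := by
        ext φ
        simp only [Set.mem_setOf_eq, Set.mem_univ, iff_true]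
        exact fun hh => absurd hh h
      rw [this]; exact isClosed_univ
  · rw [Set.setOf_forall]
    refine isClosed_iInter fun x => ?_
    rw [Set.setOf_forall]
    refine isClosed_iInter fun y => ?_
    by_cases h : x.1 * y.1 = 1
    · have : {φ : F.HomogUnits → Bool | x.1 * y.1 = 1 → (φ x = true ∨ φ y = true)}
          = {φ | φ x = true} ∪ {φ | φ y = true} := by
        ext φ; simp [h]
      rw [this]; exact (isClosed_eval x true).union (isClosed_eval y true)
    · have : {φ : F.HomogUnits → Bool | x.1 * y.1 = 1 → (φ x = true ∨ φ y = true)}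
          = Set.univ := by
        ext φ; simp [h]
      rw [this]; exact isClosed_univ
  · rw [Set.setOf_forall]
    refine isClosed_iInter fun x => ?_
    by_cases hx : x.1 ∈ Fs
    · have : {φ : F.HomogUnits → Bool | x.1 ∈ Fs → φ x = true} = {φ | φ x = true} := by
        ext φ; simp [hx]
      rw [this]; exact isClosed_eval x true
    · have : {φ : F.HomogUnits → Bool | x.1 ∈ Fs → φ x = true} = Set.univ := by
        ext φ; simp [hx]
      rw [this]; exact isClosed_univ
  · rw [Set.setOf_forall]
    refine isClosed_iInter fun x => ?_
    by_cases hx : x.1 ∈ Gs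
    · have : {φ : F.HomogUnits → Bool | x.1 ∈ Gs → φ x = false} = {φ | φ x = false} := by
        ext φ; simp [hx]
      rw [this]; exact isClosed_eval x false
    · have : {φ : F.HomogUnits → Bool | x.1 ∈ Gs → φ x = false} = Set.univ := by
        ext φ; simp [hx]
      rw [this]; exact isClosed_univ

theorem chi_injective (k₀ : Subring K) : Function.Injective (F.chi k₀) := by
  intro O₁ O₂ h
  have key : ∀ A B : F.ZR k₀, F.chi k₀ A = F.chi k₀ B → A.1 ≤ B.1 := by
    intro A B hAB x hx
    have hx' := A.2.1.2.1 x hx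
    have hsub : AddSubgroup.closure {y : K | y ∈ A.1 ∧ F.Homogeneous y}
        ≤ B.1.toAddSubgroup := by
      rw [AddSubgroup.closure_le]
      rintro y ⟨hyA, hy⟩
      by_cases hy0 : y = 0
      · subst hy0; exact B.1.zero_mem
      · have hc := congrFun hAB ⟨y, hy0, hy⟩
        simp only [chi, decide_eq_decide] at hc
        exact hc.mp hyA
    exact hsub hx'
  exact Subtype.ext (le_antisymm (key O₁ O₂ h) (key O₂ O₁ h.symm))

theorem chi_isEmbedding (k₀ : Subring K) :
    @Topology.IsEmbedding _ _ (F.constructibleTop k₀) _ (F.chi k₀) := by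
  letI : TopologicalSpace (F.ZR k₀) := F.constructibleTop k₀
  refine ⟨⟨?_⟩, F.chi_injective k₀⟩
  apply le_antisymm
  · -- constructibleTop ≤ induced : continuity of chi
    rw [← continuous_iff_le_induced]
    apply continuous_pi
    intro x
    have : ∀ b : Bool, IsOpen {O : F.ZR k₀ | F.chi k₀ O x = b} := by
      intro b
      have hbasic : ∀ (Fs' Gs' : Finset K), (∀ a ∈ Fs', a ≠ 0 ∧ F.Homogeneous a) →
          (∀ a ∈ Gs', a ≠ 0 ∧ F.Homogeneous a) →
          IsOpen {O : F.ZR k₀ | (∀ a ∈ Fs', a ∈ O.1) ∧ ∀ b ∈ Gs', b ∉ O.1} := by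
        intro Fs' Gs' h1 h2
        exact TopologicalSpace.isOpen_generateFrom_of_mem ⟨Fs', Gs', h1, h2, rfl⟩
      cases b with
      | true =>
        have h1 := hbasic {x.1} ∅ (by simpa using x.2) (by simp)
        have he : {O : F.ZR k₀ | F.chi k₀ O x = true}
            = {O : F.ZR k₀ | (∀ a ∈ ({x.1} : Finset K), a ∈ O.1) ∧
                ∀ b ∈ (∅ : Finset K), b ∉ O.1} := by
          ext O; simp [chi]
        rw [he]; exact h1
      | false =>
        have h1 := hbasic ∅ {x.1} (by simp) (by simpa using x.2)
        have he : {O : F.ZR k₀ | F.chi k₀ O x = false}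
            = {O : F.ZR k₀ | (∀ a ∈ (∅ : Finset K), a ∈ O.1) ∧
                ∀ b ∈ ({x.1} : Finset K), b ∉ O.1} := by
          ext O; simp [chi]
        rw [he]; exact h1
    have hc : Continuous fun O : F.ZR k₀ => F.chi k₀ O x := by
      apply continuous_discrete_rng.mpr
      intro b
      have he : (fun O : F.ZR k₀ => F.chi k₀ O x) ⁻¹' {b}
          = {O : F.ZR k₀ | F.chi k₀ O x = b} := rfl
      rw [he]; exact this b
    exact hc
  · -- induced ≤ constructibleTop
    rw [GradedField.constructibleTop]
    apply le_generateFrom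
    rintro s ⟨Fs', Gs', h1, h2, rfl⟩
    rw [isOpen_induced_iff]
    refine ⟨(⋂ x ∈ {x : F.HomogUnits | x.1 ∈ Fs'}, {φ : F.HomogUnits → Bool | φ x = true})
        ∩ ⋂ x ∈ {x : F.HomogUnits | x.1 ∈ Gs'}, {φ : F.HomogUnits → Bool | φ x = false},
      ?_, ?_⟩
    · have hf1 : Set.Finite {x : F.HomogUnits | x.1 ∈ Fs'} := by
        apply Set.Finite.preimage (Set.injOn_of_injective Subtype.val_injective)
        exact Fs'.finite_toSet
      have hf2 : Set.Finite {x : F.HomogUnits | x.1 ∈ Gs'} := by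
        apply Set.Finite.preimage (Set.injOn_of_injective Subtype.val_injective)
        exact Gs'.finite_toSet
      exact (hf1.isOpen_biInter fun x _ => isOpen_eval x true).inter
        (hf2.isOpen_biInter fun x _ => isOpen_eval x false)
    · ext O
      simp only [Set.mem_preimage, Set.mem_inter_iff, Set.mem_iInter, Set.mem_setOf_eq,
        chi, decide_eq_true_eq, decide_eq_false_iff_not]
      constructor
      · rintro ⟨ha, hb⟩
        constructor
        · intro a haF
          exact ha ⟨a, (h1 a haF).1, (h1 a haF).2⟩ haF
        · intro b hbG
          exact hb ⟨b, (h2 b hbG).1, (h2 b hbG).2⟩ hbG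
      · rintro ⟨ha, hb⟩
        exact ⟨fun x hx => ha x.1 hx, fun x hx => hb x.1 hx⟩

theorem chi_mem_cond (k₀ : Subring K) (Fs Gs : Set K) (O : F.ZR k₀)
    (hO : (∀ a ∈ Fs, a ∈ O.1) ∧ ∀ b ∈ Gs, b ∉ O.1) :
    F.cond k₀ Fs Gs (F.chi k₀ O) := by
  simp only [cond, chi, decide_eq_true_eq, decide_eq_false_iff_not, decide_eq_decide]
  refine ⟨?_, ?_, ?_, ?_, ?_, ?_⟩
  · exact fun x hx => O.2.2 hx
  · rintro x y z hz hx hy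
    rw [hz]; exact O.1.mul_mem hx hy
  · rintro y l hsum hall
    rw [hsum]
    refine list_sum_mem ?_
    intro x hx
    obtain ⟨x', hx', rfl⟩ := List.mem_map.mp hx
    exact hall x' hx'
  · intro x y hxy
    rcases O.2.1.2.2 x.1 (Subring.mem_top _) x.2.2 x.2.1 with h | h
    · exact Or.inl h
    · right
      rwa [Ring.inverse_eq_of_mul_eq_one' hxy] at h
  · exact fun x hx => hO.1 x.1 hx
  · exact fun x hx => hO.2 x.1 hx


/-- Candidate set of homogeneous elements for the valuation ring built from `φ`. -/
def Phi (φ : F.HomogUnits → Bool) : Set K :=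
  {x | x = 0 ∨ ∃ hx : x ≠ 0 ∧ F.Homogeneous x, φ ⟨x, hx⟩ = true}

variable {k₀ : Subring K} {Fs Gs : Set K} {φ : F.HomogUnits → Bool}

theorem neg_one_mem_Phi (hφ : F.cond k₀ Fs Gs φ) : (-1 : K) ∈ F.Phi φ :=
  Or.inr ⟨⟨F.neg_one_ne_zero', F.homogeneous_neg F.homogeneous_one⟩,
    hφ.1 _ (k₀.neg_mem k₀.one_mem)⟩

theorem phi_neg (hφ : F.cond k₀ Fs Gs φ) (x : F.HomogUnits) (hx : φ x = true)
    (h : -x.1 ≠ 0 ∧ F.Homogeneous (-x.1)) : φ ⟨-x.1, h⟩ = true := by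
  refine hφ.2.1 x ⟨-1, F.neg_one_ne_zero', F.homogeneous_neg F.homogeneous_one⟩
    ⟨-x.1, h⟩ ?_ hx (hφ.1 _ (k₀.neg_mem k₀.one_mem))
  simp [mul_neg_one]

theorem sum_repr (hφ : F.cond k₀ Fs Gs φ) {a : K}
    (ha : a ∈ AddSubgroup.closure (F.Phi φ)) :
    ∃ l : List F.HomogUnits, (∀ x ∈ l, φ x = true) ∧ a = (l.map Subtype.val).sum := by
  induction ha using AddSubgroup.closure_induction with
  | mem x hx =>
    rcases hx with rfl | ⟨hx', hφx⟩
    · exact ⟨[], by simp, rfl⟩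
    · exact ⟨[⟨x, hx'⟩], fun w hw => (List.mem_singleton.mp hw) ▸ hφx, (add_zero x).symm⟩
  | zero => exact ⟨[], by simp, rfl⟩
  | add x y hx hy ihx ihy =>
    obtain ⟨l₁, h₁, e₁⟩ := ihx
    obtain ⟨l₂, h₂, e₂⟩ := ihy
    refine ⟨l₁ ++ l₂, ?_, ?_⟩
    · intro w hw
      rcases List.mem_append.mp hw with hw | hw
      · exact h₁ w hw
      · exact h₂ w hw
    · subst e₁ e₂
      exact List.sum_append.symm.trans (congrArg List.sum List.map_append.symm)
  | neg x hx ih =>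
    obtain ⟨l, hl, e⟩ := ih
    refine ⟨l.map (fun w : F.HomogUnits =>
      (⟨-w.1, neg_ne_zero.mpr w.2.1, F.homogeneous_neg w.2.2⟩ : F.HomogUnits)), ?_, ?_⟩
    · intro w hw
      obtain ⟨w', hw', rfl⟩ := List.mem_map.mp hw
      exact F.phi_neg hφ w' (hl w' hw') _
    · have h1 : (l.map (fun w : F.HomogUnits =>
          (⟨-w.1, neg_ne_zero.mpr w.2.1, F.homogeneous_neg w.2.2⟩ : F.HomogUnits))).map
            Subtype.val = (l.map Subtype.val).map (fun t => -t) := by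
        simp only [List.map_map]
        exact (List.map_map (g := fun t : K => -t) (f := fun w : F.HomogUnits => w.1) (l := l)).symm
      subst e
      exact ((congrArg List.sum h1).trans (list_sum_map_neg _)).symm

theorem mem_closure_Phi_iff (hφ : F.cond k₀ Fs Gs φ) (x : F.HomogUnits) :
    x.1 ∈ AddSubgroup.closure (F.Phi φ) ↔ φ x = true := by
  constructor
  · intro hx
    obtain ⟨l, hl, e⟩ := F.sum_repr hφ hx
    exact hφ.2.2.1 x l e hl
  · intro hx
    exact AddSubgroup.subset_closure (Or.inr ⟨x.2, hx⟩)

theorem Phi_mul (hφ : F.cond k₀ Fs Gs φ) :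
    ∀ x ∈ F.Phi φ, ∀ y ∈ F.Phi φ, x * y ∈ F.Phi φ := by
  intro x hx y hy
  rcases hx with rfl | ⟨hx', hφx⟩
  · left; rw [zero_mul]
  · rcases hy with rfl | ⟨hy', hφy⟩
    · left; rw [mul_zero]
    · right
      have hne : x * y ≠ 0 := F.mul_ne_zero' hx'.2 hy'.2 hx'.1 hy'.1
      refine ⟨⟨hne, F.homogeneous_mul hx'.2 hy'.2⟩, ?_⟩
      exact hφ.2.1 ⟨x, hx'⟩ ⟨y, hy'⟩ ⟨x * y, hne, F.homogeneous_mul hx'.2 hy'.2⟩ rfl hφx hφy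

theorem closure_Phi_mul (hφ : F.cond k₀ Fs Gs φ) :
    ∀ a ∈ AddSubgroup.closure (F.Phi φ), ∀ b ∈ AddSubgroup.closure (F.Phi φ),
      a * b ∈ AddSubgroup.closure (F.Phi φ) := by
  set A := AddSubgroup.closure (F.Phi φ)
  intro a ha
  induction ha using AddSubgroup.closure_induction with
  | mem x hx =>
    intro b hb
    induction hb using AddSubgroup.closure_induction with
    | mem y hy => exact AddSubgroup.subset_closure (F.Phi_mul hφ x hx y hy)
    | zero => rw [mul_zero]; exact A.zero_mem
    | add y z _ _ ihy ihz => rw [mul_add]; exact A.add_mem ihy ihz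
    | neg y _ ihy => rw [mul_neg]; exact A.neg_mem ihy
  | zero => intro b _; rw [zero_mul]; exact A.zero_mem
  | add x y _ _ ihx ihy => intro b hb; rw [add_mul]; exact A.add_mem (ihx b hb) (ihy b hb)
  | neg x _ ihx => intro b hb; rw [neg_mul]; exact A.neg_mem (ihx b hb)

theorem cond_exists (hk₀ : F.IsGradedSubfield k₀)
    (hFs : ∀ a ∈ Fs, a ≠ 0 ∧ F.Homogeneous a) (hGs : ∀ b ∈ Gs, b ≠ 0 ∧ F.Homogeneous b)
    (hφ : F.cond k₀ Fs Gs φ) :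
    ∃ O : F.ZR k₀, ((∀ a ∈ Fs, a ∈ O.1) ∧ ∀ b ∈ Gs, b ∉ O.1) ∧ F.chi k₀ O = φ := by
  have h1A : (1 : K) ∈ AddSubgroup.closure (F.Phi φ) :=
    (F.mem_closure_Phi_iff hφ ⟨1, F.one_ne_zero', F.homogeneous_one⟩).mpr
      (hφ.1 ⟨1, F.one_ne_zero', F.homogeneous_one⟩ k₀.one_mem)
  let O : Subring K :=
    { carrier := AddSubgroup.closure (F.Phi φ)
      zero_mem' := (AddSubgroup.closure (F.Phi φ)).zero_mem
      add_mem' := fun ha hb => (AddSubgroup.closure (F.Phi φ)).add_mem ha hb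
      neg_mem' := fun ha => (AddSubgroup.closure (F.Phi φ)).neg_mem ha
      one_mem' := h1A
      mul_mem' := fun ha hb => F.closure_Phi_mul hφ _ ha _ hb }
  have hOmem : ∀ x : K, x ∈ O ↔ x ∈ AddSubgroup.closure (F.Phi φ) := fun x => Iff.rfl
  have hgraded : F.IsGradedSubring O := by
    intro x hx
    have hx' : x ∈ AddSubgroup.closure (F.Phi φ) := hx
    refine AddSubgroup.closure_mono ?_ hx'
    intro y hy
    have hy2 := hy
    rcases hy with rfl | ⟨hy', _⟩
    · exact ⟨O.zero_mem, F.homogeneous_zero⟩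
    · exact ⟨(hOmem y).mpr (AddSubgroup.subset_closure hy2), hy'.2⟩
  have hval : ∀ x : K, F.Homogeneous x → x ≠ 0 → (x ∈ O ∨ Ring.inverse x ∈ O) := by
    intro x hhom hx0
    obtain ⟨h, hxh⟩ := hhom
    obtain ⟨y, hyh, hxy⟩ := F.inv_mem hxh hx0
    have hy0 : y ≠ 0 := by
      intro h0
      rw [h0, mul_zero] at hxy
      exact F.zero_ne_one hxy
    rcases hφ.2.2.2.1 ⟨x, hx0, h, hxh⟩ ⟨y, hy0, h⁻¹, hyh⟩ hxy with hc | hc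
    · exact Or.inl ((F.mem_closure_Phi_iff hφ ⟨x, hx0, h, hxh⟩).mpr hc)
    · right
      rw [Ring.inverse_eq_of_mul_eq_one' hxy]
      exact (F.mem_closure_Phi_iff hφ ⟨y, hy0, h⁻¹, hyh⟩).mpr hc
  have hk₀O : k₀ ≤ O := by
    intro x hx
    have hx' := hk₀.graded x hx
    refine AddSubgroup.closure_mono ?_ hx'
    rintro y ⟨hyk, hyhom⟩
    by_cases hy0 : y = 0
    · exact Or.inl hy0
    · exact Or.inr ⟨⟨hy0, hyhom⟩, hφ.1 ⟨y, hy0, hyhom⟩ hyk⟩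
  refine ⟨⟨O, ⟨le_top, hgraded, fun x _ hhom hx0 => hval x hhom hx0⟩, hk₀O⟩, ⟨?_, ?_⟩, ?_⟩
  · intro a ha
    exact (F.mem_closure_Phi_iff hφ ⟨a, (hFs a ha).1, (hFs a ha).2⟩).mpr
      (hφ.2.2.2.2.1 ⟨a, (hFs a ha).1, (hFs a ha).2⟩ ha)
  · intro b hb hbO
    have := (F.mem_closure_Phi_iff hφ ⟨b, (hGs b hb).1, (hGs b hb).2⟩).mp hbO
    rw [hφ.2.2.2.2.2 ⟨b, (hGs b hb).1, (hGs b hb).2⟩ hb] at this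
    exact Bool.false_ne_true this
  · funext x
    have hiff := F.mem_closure_Phi_iff hφ x
    classical
    show decide (x.1 ∈ O) = φ x
    cases hb : φ x with
    | true =>
      simp only [decide_eq_true_eq]
      exact (hOmem x.1).mpr (hiff.mpr hb)
    | false =>
      simp only [decide_eq_false_iff_not]
      intro hmem
      rw [hiff.mp ((hOmem x.1).mp hmem)] at hb
      exact Bool.false_ne_true hb.symm


end GradedField

end AuxProof

/-- Let `K/k₀` be an extension of `H`-graded fields and `P_{K/k₀}` the Zariski–Riemann space
of graded valuation rings of `K` containing `k₀`, with the constructible topology.  Then for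
arbitrary subsets `Fs`, `Gs` of the homogeneous units of `K`, the subset
`{O : Fs ⊆ O, Gs ∩ O = ∅}` is compact and Hausdorff. -/
theorem GradedField.isCompact_t2_constructible {H : Type*} [CommGroup H] [DecidableEq H]
    {K : Type*} [CommRing K] (F : GradedField H K) (k₀ : Subring K)
    (hk₀ : F.IsGradedSubfield k₀) (Fs Gs : Set K)
    (hFs : ∀ a ∈ Fs, a ≠ 0 ∧ F.Homogeneous a) (hGs : ∀ b ∈ Gs, b ≠ 0 ∧ F.Homogeneous b) :
    @IsCompact (F.ZR k₀) (F.constructibleTop k₀)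
        {O : F.ZR k₀ | (∀ a ∈ Fs, a ∈ O.1) ∧ ∀ b ∈ Gs, b ∉ O.1} ∧
      @T2Space {O : F.ZR k₀ // (∀ a ∈ Fs, a ∈ O.1) ∧ ∀ b ∈ Gs, b ∉ O.1}
        (TopologicalSpace.induced Subtype.val (F.constructibleTop k₀)) := by
  letI : TopologicalSpace (F.ZR k₀) := F.constructibleTop k₀
  have hemb : Topology.IsEmbedding (F.chi k₀) := F.chi_isEmbedding k₀
  have himg : F.chi k₀ '' {O : F.ZR k₀ | (∀ a ∈ Fs, a ∈ O.1) ∧ ∀ b ∈ Gs, b ∉ O.1}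
      = {φ | F.cond k₀ Fs Gs φ} := by
    apply subset_antisymm
    · rintro _ ⟨O, hO, rfl⟩
      exact F.chi_mem_cond k₀ Fs Gs O hO
    · intro φ hφ
      obtain ⟨O, hO, hchi⟩ := F.cond_exists hk₀ hFs hGs hφ
      exact ⟨O, hO, hchi⟩
  constructor
  · rw [hemb.toIsInducing.isCompact_iff, himg]
    exact (F.isClosed_cond k₀ Fs Gs).isCompact
  · haveI : T2Space (F.ZR k₀) := hemb.t2Space
    exact inferInstance
end ZR
end
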